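/- arXiv:1406.3665 — 10 statements merged into one kernel-verified Lean document; each statement's English description precedes it below -/
import Mathlib

section
/- Let X_i ⊆ ℝ^{m_i} be a nonempty closed convex set, X = ∏_{j=1}^n X_j, let g_i : ℝ^{m_i} → ℝ be convex, and let f̃_i : X_i × X → ℝ be such that for every y ∈ X the function f̃_i(·,y) is continuously differentiable and strongly convex with parameter τ > 0 on X_i, and for every x_i ∈ X_i the map y ↦ ∇_{x_i} f̃_i(x_i,y) is Lipschitz continuous on X with constant L̃. Then for every y ∈ X the problem min_{x_i ∈ X_i} f̃_i(x_i,y) + g_i(x_i) has a unique minimizer x̂_i(y), and the map y ↦ x̂_i(y) is Lipschitz continuous: ‖x̂_i(y) − x̂_i(z)‖ ≤ (L̃/τ)‖y − z‖ for all y, z ∈ X. -/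
open scoped RealInnerProductSpace
open Filter Topology Finset

noncomputable section

section aux
variable {E : Type*} [NormedAddCommGroup E] [InnerProductSpace ℝ E]

/-- Combination inequality from strong convexity (first-order form). -/
lemma sc_combine (f : E → ℝ) (G : E → E) (S : Set E) (hS : Convex ℝ S) (τ : ℝ)
    (hsc : ∀ u ∈ S, ∀ u' ∈ S, f u ≥ f u' + ⟪G u', u - u'⟫ + τ / 2 * ‖u - u'‖ ^ 2)
    {a b : E} (ha : a ∈ S) (hb : b ∈ S) {t : ℝ} (ht0 : 0 ≤ t) (ht1 : t ≤ 1) :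
    (1 - t) * f a + t * f b ≥ f ((1 - t) • a + t • b) + τ / 2 * (t * (1 - t)) * ‖b - a‖ ^ 2 := by
  set p := (1 - t) • a + t • b with hp
  have hpS : p ∈ S := hS ha hb (by linarith) ht0 (by ring)
  have e1 : a - p = t • (a - b) := by rw [hp]; module
  have e2 : b - p = (1 - t) • (b - a) := by rw [hp]; module
  have h1 := hsc a ha p hpS
  have h2 := hsc b hb p hpS
  rw [e1, real_inner_smul_right] at h1
  rw [e2, real_inner_smul_right] at h2
  have n1 : ‖t • (a - b)‖ ^ 2 = t ^ 2 * ‖a - b‖ ^ 2 := by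
    rw [norm_smul, Real.norm_eq_abs, mul_pow, sq_abs]
  have n2 : ‖(1 - t) • (b - a)‖ ^ 2 = (1 - t) ^ 2 * ‖b - a‖ ^ 2 := by
    rw [norm_smul, Real.norm_eq_abs, mul_pow, sq_abs]
  rw [n1] at h1
  rw [n2] at h2
  have nab : ‖a - b‖ = ‖b - a‖ := norm_sub_rev a b
  have iab : ⟪G p, a - b⟫ = - ⟪G p, b - a⟫ := by
    rw [← inner_neg_right]; congr 1; abel
  rw [nab, iab] at h1
  nlinarith [mul_le_mul_of_nonneg_left h1 (by linarith : (0:ℝ) ≤ 1 - t),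
    mul_le_mul_of_nonneg_left h2 ht0]


/-- Quadratic growth at a minimizer of a strongly convex + convex sum. -/
lemma sc_growth (f gg : E → ℝ) (G : E → E) (S : Set E) (hS : Convex ℝ S) (τ : ℝ)
    (hgg : ConvexOn ℝ Set.univ gg)
    (hsc : ∀ u ∈ S, ∀ u' ∈ S, f u ≥ f u' + ⟪G u', u - u'⟫ + τ / 2 * ‖u - u'‖ ^ 2)
    {w : E} (hw : w ∈ S) (hmin : IsMinOn (fun u => f u + gg u) S w)
    {u : E} (hu : u ∈ S) :
    f u + gg u ≥ (f w + gg w) + τ / 2 * ‖u - w‖ ^ 2 := by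
  have key : ∀ t ∈ Set.Ioc (0:ℝ) 1,
      τ / 2 * ((1 - t) * ‖u - w‖ ^ 2) ≤ (f u + gg u) - (f w + gg w) := by
    intro t ht
    obtain ⟨ht0, ht1⟩ := ht
    have hc := sc_combine f G S hS τ hsc hw hu ht0.le ht1
    have hgc : gg ((1 - t) • w + t • u) ≤ (1 - t) * gg w + t * gg u :=
      hgg.2 (Set.mem_univ w) (Set.mem_univ u) (by linarith) ht0.le (by ring)
    have hpS : (1 - t) • w + t • u ∈ S := hS hw hu (by linarith) ht0.le (by ring)
    have hmp := hmin hpS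
    simp only [Set.mem_setOf_eq] at hmp
    nlinarith [hmp]
  have htend : Tendsto (fun t : ℝ => τ / 2 * ((1 - t) * ‖u - w‖ ^ 2)) (𝓝[>] (0:ℝ))
      (𝓝 (τ / 2 * ((1 - 0) * ‖u - w‖ ^ 2))) := by
    apply Tendsto.mono_left _ nhdsWithin_le_nhds
    exact (continuous_const.mul ((continuous_const.sub continuous_id).mul
      continuous_const)).tendsto 0
  have hle := le_of_tendsto htend
    (Filter.eventually_of_mem (Ioc_mem_nhdsGT_of_mem (by norm_num : (0:ℝ) ∈ Set.Ico 0 1)) key)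
  simp only [sub_zero, one_mul] at hle
  linarith


/-- Existence of a minimizer for strongly convex + convex on a nonempty closed convex set. -/
lemma sc_exists [FiniteDimensional ℝ E] (f gg : E → ℝ) (G : E → E) (S : Set E)
    (hSne : S.Nonempty) (hScl : IsClosed S) (hS : Convex ℝ S) (τ : ℝ) (hτ : 0 < τ)
    (hf : Continuous f) (hgg : ConvexOn ℝ Set.univ gg)
    (hsc : ∀ u ∈ S, ∀ u' ∈ S, f u ≥ f u' + ⟪G u', u - u'⟫ + τ / 2 * ‖u - u'‖ ^ 2) :
    ∃ w ∈ S, IsMinOn (fun u => f u + gg u) S w := by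
  obtain ⟨x0, hx0⟩ := hSne
  have hgc : Continuous gg := continuousOn_univ.mp
    (hgg.continuousOn isOpen_univ)
  have hFc : Continuous fun u => f u + gg u := hf.add hgc
  -- minimizer over the small ball
  have hK1 : IsCompact (S ∩ Metric.closedBall x0 1) :=
    (isCompact_closedBall x0 1).inter_left hScl
  obtain ⟨w1, hw1K, hw1min⟩ := hK1.exists_isMinOn
    ⟨x0, hx0, Metric.mem_closedBall_self zero_le_one⟩ hFc.continuousOn
  set Δ := (f x0 + gg x0) - (f w1 + gg w1) with hΔdef
  have hΔ0 : 0 ≤ Δ := by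
    have := hw1min ⟨hx0, Metric.mem_closedBall_self zero_le_one⟩
    simp only [Set.mem_setOf_eq] at this
    simp only [hΔdef]; linarith
  set R : ℝ := max 1 (2 * Δ / τ) + 1 with hRdef
  have hR1 : 1 < R := by
    have := le_max_left 1 (2 * Δ / τ); simp only [hRdef]; linarith
  have hRΔ : 2 * Δ / τ < R := by
    have := le_max_right 1 (2 * Δ / τ); simp only [hRdef]; linarith
  -- minimizer over the big ball
  have hK : IsCompact (S ∩ Metric.closedBall x0 R) :=
    (isCompact_closedBall x0 R).inter_left hScl
  obtain ⟨w, hwK, hwmin⟩ := hK.exists_isMinOn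
    ⟨x0, hx0, Metric.mem_closedBall_self (by linarith)⟩ hFc.continuousOn
  have hww1 : f w + gg w ≤ f w1 + gg w1 := by
    have := hwmin ⟨hw1K.1, Metric.closedBall_subset_closedBall hR1.le hw1K.2⟩
    simpa using this
  refine ⟨w, hwK.1, ?_⟩
  intro u hu
  simp only [Set.mem_setOf_eq]
  by_cases hcase : u ∈ Metric.closedBall x0 R
  · have := hwmin ⟨hu, hcase⟩; simpa using this
  · -- u is far away
    have hd : R < ‖u - x0‖ := by
      rw [Metric.mem_closedBall, not_le, dist_eq_norm] at hcase; exact hcase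
    set d := ‖u - x0‖ with hddef
    have hd0 : 0 < d := by linarith
    set t : ℝ := 1 / d with htdef
    have ht0 : 0 < t := by positivity
    have htd : t * d = 1 := by rw [htdef, one_div, inv_mul_cancel₀ hd0.ne']
    have ht1 : t < 1 := by
      rw [htdef]; rw [div_lt_one hd0]; linarith
    set p := (1 - t) • x0 + t • u with hpdef
    have hpS : p ∈ S := hS hx0 hu (by linarith) ht0.le (by ring)
    have hpball : p ∈ Metric.closedBall x0 1 := by
      have e : p - x0 = t • (u - x0) := by rw [hpdef]; module
      rw [Metric.mem_closedBall, dist_eq_norm, e, norm_smul, Real.norm_eq_abs,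
        abs_of_pos ht0, ← hddef, htd]
    have hFp : f w1 + gg w1 ≤ f p + gg p := by
      have := hw1min ⟨hpS, hpball⟩; simpa using this
    have hcomb := sc_combine f G S hS τ hsc hx0 hu ht0.le ht1.le
    rw [← hpdef, ← hddef] at hcomb
    have hgp : gg p ≤ (1 - t) * gg x0 + t * gg u := by
      rw [hpdef]
      exact hgg.2 (Set.mem_univ x0) (Set.mem_univ u) (by linarith) ht0.le (by ring)
    have ed : τ / 2 * (t * (1 - t)) * d ^ 2 = τ / 2 * ((1 - t) * d) := by
      have : t * (1 - t) * d ^ 2 = (t * d) * ((1 - t) * d) := by ring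
      rw [mul_assoc, this, htd]; ring
    have hdΔ : Δ ≤ τ / 2 * d := by
      rw [div_lt_iff₀ hτ] at hRΔ
      nlinarith
    have h5 : t * (f w1 + gg w1) ≤ t * (f u + gg u) := by
      nlinarith [mul_nonneg (by linarith : (0:ℝ) ≤ 1 - t)
        (by linarith : (0:ℝ) ≤ τ / 2 * d - Δ)]
    have h6 : f w1 + gg w1 ≤ f u + gg u := (mul_le_mul_iff_right₀ ht0).mp h5
    linarith

end aux

/-- The product space `ℝ^N = ℝ^{m_1} × … × ℝ^{m_n}` with the Euclidean norm. -/
abbrev TS (n : ℕ) (m : Fin n → ℕ) := PiLp 2 fun j => EuclideanSpace ℝ (Fin (m j))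

/-- For each `y ∈ X`, the subproblem
`min_{x_i ∈ X_i} f̃_i(x_i, y) + g_i(x_i)` has a unique minimizer `x̂_i(y)`, and the
map `y ↦ x̂_i(y)` is Lipschitz with constant `L̃ / τ`. -/
theorem stmt0
    {n : ℕ} {m : Fin n → ℕ} (i : Fin n)
    (X : ∀ j, Set (EuclideanSpace ℝ (Fin (m j))))
    (hXne : ∀ j, (X j).Nonempty) (hXcl : ∀ j, IsClosed (X j)) (hXcv : ∀ j, Convex ℝ (X j))
    (g : EuclideanSpace ℝ (Fin (m i)) → ℝ) (hg : ConvexOn ℝ Set.univ g)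
    (ft : EuclideanSpace ℝ (Fin (m i)) → TS n m → ℝ)
    (τ Lt : ℝ) (hτ : 0 < τ)
    -- `f̃_i(·, y)` is continuously differentiable for every `y ∈ X`
    (hC1 : ∀ y : TS n m, (∀ j, y j ∈ X j) → ContDiff ℝ 1 fun u => ft u y)
    -- `f̃_i(·, y)` is strongly convex with parameter `τ` on `X_i`, uniformly in `y ∈ X`
    (hsc : ∀ y : TS n m, (∀ j, y j ∈ X j) → ∀ u ∈ X i, ∀ u' ∈ X i,
      ft u y ≥ ft u' y + ⟪gradient (fun v => ft v y) u', u - u'⟫ + τ / 2 * ‖u - u'‖ ^ 2)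
    -- `y ↦ ∇_{x_i} f̃_i(x_i, y)` is Lipschitz on `X` with constant `L̃`, for every `x_i ∈ X_i`
    (hLip : ∀ xi ∈ X i, ∀ y z : TS n m, (∀ j, y j ∈ X j) → (∀ j, z j ∈ X j) →
      ‖gradient (fun v => ft v y) xi - gradient (fun v => ft v z) xi‖ ≤ Lt * ‖y - z‖) :
    -- existence and uniqueness of the minimizer
    (∀ y : TS n m, (∀ j, y j ∈ X j) →
      ∃! w, w ∈ X i ∧ IsMinOn (fun u => ft u y + g u) (X i) w) ∧
    -- Lipschitz continuity of the best-response map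
    (∀ y z : TS n m, (∀ j, y j ∈ X j) → (∀ j, z j ∈ X j) →
      ∀ wy wz, wy ∈ X i → wz ∈ X i →
        IsMinOn (fun u => ft u y + g u) (X i) wy →
        IsMinOn (fun u => ft u z + g u) (X i) wz →
        ‖wy - wz‖ ≤ Lt / τ * ‖y - z‖) := by
  constructor
  · -- existence and uniqueness
    intro y hy
    obtain ⟨w, hwS, hwmin⟩ := sc_exists (fun u => ft u y) g
      (gradient (fun v => ft v y)) (X i) (hXne i) (hXcl i) (hXcv i) τ hτ
      (hC1 y hy).continuous hg (hsc y hy)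
    refine ⟨w, ⟨hwS, hwmin⟩, ?_⟩
    rintro w' ⟨hw'S, hw'min⟩
    have h1 := sc_growth (fun u => ft u y) g (gradient (fun v => ft v y)) (X i)
      (hXcv i) τ hg (hsc y hy) hwS hwmin hw'S
    have h2 : ft w' y + g w' ≤ ft w y + g w := by
      have := hw'min hwS; simpa using this
    have hn : ‖w' - w‖ ^ 2 ≤ 0 := by nlinarith
    have : ‖w' - w‖ = 0 := by nlinarith [sq_nonneg (‖w' - w‖), norm_nonneg (w' - w)]
    have := norm_eq_zero.mp this
    exact sub_eq_zero.mp this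
  · -- Lipschitz continuity
    intro y z hy hz wy wz hwyS hwzS hwymin hwzmin
    have hC0 : (0:ℝ) ≤ Lt * ‖y - z‖ :=
      le_trans (norm_nonneg _) (hLip wy hwyS y z hy hz)
    set d := ‖wy - wz‖ with hddef
    have hd0 : 0 ≤ d := norm_nonneg _
    rcases eq_or_lt_of_le hd0 with hdz | hdz
    · -- d = 0
      have e : Lt / τ * ‖y - z‖ = Lt * ‖y - z‖ / τ := by ring
      rw [← hdz, e]
      exact div_nonneg hC0 hτ.le
    · -- quadratic growth at both minimizers
      have h1 := sc_growth (fun u => ft u y) g (gradient (fun v => ft v y)) (X i)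
        (hXcv i) τ hg (hsc y hy) hwyS hwymin hwzS
      have h2 := sc_growth (fun u => ft u z) g (gradient (fun v => ft v z)) (X i)
        (hXcv i) τ hg (hsc z hz) hwzS hwzmin hwyS
      rw [norm_sub_rev] at h1
      -- mean value inequality for u ↦ ft u y - ft u z on X i
      have hdy : Differentiable ℝ (fun u => ft u y) := (hC1 y hy).differentiable one_ne_zero
      have hdz' : Differentiable ℝ (fun u => ft u z) := (hC1 z hz).differentiable one_ne_zero
      have hmvt : ‖(ft wz y - ft wz z) - (ft wy y - ft wy z)‖ ≤ (Lt * ‖y - z‖) * ‖wz - wy‖ := by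
        refine Convex.norm_image_sub_le_of_norm_hasFDerivWithin_le
          (f := fun u => ft u y - ft u z)
          (f' := fun x => fderiv ℝ (fun u => ft u y) x - fderiv ℝ (fun u => ft u z) x)
          (fun x _ => (((hdy x).hasFDerivAt).sub ((hdz' x).hasFDerivAt)).hasFDerivWithinAt)
          (fun x hx => ?_) (hXcv i) hwyS hwzS
        have e : gradient (fun v => ft v y) x - gradient (fun v => ft v z) x
            = (InnerProductSpace.toDual ℝ _).symm
              (fderiv ℝ (fun u => ft u y) x - fderiv ℝ (fun u => ft u z) x) := by
          unfold gradient; rw [map_sub]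
        have := hLip x hx y z hy hz
        rwa [e, LinearIsometryEquiv.norm_map] at this
      have hmvt' : (ft wz y - ft wz z) - (ft wy y - ft wy z) ≤ (Lt * ‖y - z‖) * d := by
        rw [norm_sub_rev wz wy] at hmvt
        calc (ft wz y - ft wz z) - (ft wy y - ft wy z)
            ≤ ‖(ft wz y - ft wz z) - (ft wy y - ft wy z)‖ := le_abs_self _
          _ ≤ (Lt * ‖y - z‖) * d := hmvt
      -- combine
      have hkey : τ * d ^ 2 ≤ (Lt * ‖y - z‖) * d := by nlinarith
      have : d ≤ Lt * ‖y - z‖ / τ := by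
        rw [le_div_iff₀ hτ]
        nlinarith
      have e : Lt / τ * ‖y - z‖ = Lt * ‖y - z‖ / τ := by ring
      rw [e]
      exact this
end
end

section
/- For each i = 1,…,n let X_i ⊆ ℝ^{m_i} be a nonempty closed convex set, X = ∏_{i=1}^n X_i ⊆ ℝ^N (N = m_1 + … + m_n), let g_i : ℝ^{m_i} → ℝ be convex, and let f̃_i : X_i × X → ℝ be such that f̃_i(·,y) is continuously differentiable and τ-strongly convex on X_i for every y ∈ X, and ‖∇_{x_i} f̃_i(x_i,y) − ∇_{x_i} f̃_i(x_i,z)‖ ≤ L̃‖y − z‖ for all y, z ∈ X and all x_i ∈ X_i. Define the best-response map x̂ : X → X by x̂(y) = (x̂_1(y),…,x̂_n(y)) with x̂_i(y) = argmin_{x_i ∈ X_i} f̃_i(x_i,y) + g_i(x_i). Then x̂ is Lipschitz continuous with constant L̂ = √n L̃/τ, i.e. ‖x̂(y) − x̂(z)‖ ≤ (√n L̃/τ)‖y − z‖ for all y, z ∈ X. -/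
open scoped RealInnerProductSpace
open Filter Topology Finset

noncomputable section

/-- Quadratic growth at a minimizer of `f + g` where `f` is `τ`-strongly convex on `s`
and `g` is convex. -/
lemma quad_growth {E : Type*} [NormedAddCommGroup E] [InnerProductSpace ℝ E] [CompleteSpace E]
    (s : Set E) (hs : Convex ℝ s) (f g : E → ℝ) (hg : ConvexOn ℝ Set.univ g)
    (τ : ℝ)
    (hsc : ∀ u ∈ s, ∀ u' ∈ s,
      f u ≥ f u' + ⟪gradient f u', u - u'⟫ + τ / 2 * ‖u - u'‖ ^ 2)
    (u : E) (hu : u ∈ s) (hmin : IsMinOn (fun w => f w + g w) s u)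
    (x : E) (hx : x ∈ s) :
    f u + g u + τ / 2 * ‖x - u‖ ^ 2 ≤ f x + g x := by
  set d : ℝ := ‖x - u‖ ^ 2 with hd
  have hdnn : 0 ≤ d := by positivity
  have key : ∀ t : ℝ, t ∈ Set.Ioc (0:ℝ) 1 →
      f u + g u + τ / 2 * (1 - t) * d ≤ f x + g x := by
    intro t ht
    obtain ⟨ht0, ht1⟩ := ht
    set w : E := (1 - t) • u + t • x with hw
    have hws : w ∈ s := hs hu hx (by linarith) ht0.le (by ring)
    have hxw : x - w = (1 - t) • (x - u) := by rw [hw]; module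
    have huw : u - w = (-t) • (x - u) := by rw [hw]; module
    have h1 := hsc x hx w hws
    have h2 := hsc u hu w hws
    rw [hxw] at h1
    rw [huw] at h2
    rw [real_inner_smul_right] at h1 h2
    have hn1 : ‖(1 - t) • (x - u)‖ ^ 2 = (1 - t) ^ 2 * d := by
      rw [norm_smul, Real.norm_eq_abs, mul_pow, sq_abs, hd]
    have hn2 : ‖(-t) • (x - u)‖ ^ 2 = t ^ 2 * d := by
      rw [norm_smul, Real.norm_eq_abs, mul_pow, sq_abs, neg_pow, hd]; ring
    rw [hn1] at h1
    rw [hn2] at h2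
    have hgc : g w ≤ (1 - t) * g u + t * g x := by
      rw [hw]
      exact hg.2 (Set.mem_univ u) (Set.mem_univ x) (by linarith) ht0.le (by ring)
    have hminw : f u + g u ≤ f w + g w := hmin hws
    have hkey : t * (f x + g x) ≥ t * (f u + g u) + τ / 2 * t * (1 - t) * d := by
      nlinarith [mul_le_mul_of_nonneg_left h1 ht0.le,
        mul_le_mul_of_nonneg_left h2 (by linarith : (0:ℝ) ≤ 1 - t)]
    have := (mul_le_mul_iff_right₀ ht0).mp
      (by linarith : t * (f u + g u + τ / 2 * (1 - t) * d) ≤ t * (f x + g x))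
    linarith
  have htend : Tendsto (fun t : ℝ => f u + g u + τ / 2 * (1 - t) * d) (𝓝[>] (0:ℝ))
      (𝓝 (f u + g u + τ / 2 * (1 - 0) * d)) := by
    apply Tendsto.mono_left _ nhdsWithin_le_nhds
    exact (Continuous.tendsto (by continuity) 0)
  have hev : ∀ᶠ t in 𝓝[>] (0:ℝ), f u + g u + τ / 2 * (1 - t) * d ≤ f x + g x := by
    filter_upwards [Ioc_mem_nhdsGT_of_mem ⟨le_refl 0, zero_lt_one⟩] with t ht
    exact key t ht
  have := le_of_tendsto htend hev
  simpa using this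

/-- **Lemma 1.** The best-response map `x̂ : X → X`,
`x̂(y) = (x̂_1(y), …, x̂_n(y))` with `x̂_i(y) = argmin_{x_i ∈ X_i} f̃_i(x_i, y) + g_i(x_i)`,
is Lipschitz continuous with constant `L̂ = √n L̃ / τ`. -/
theorem stmt1
    {n : ℕ} {m : Fin n → ℕ}
    (X : ∀ j, Set (EuclideanSpace ℝ (Fin (m j))))
    (hXne : ∀ j, (X j).Nonempty) (hXcl : ∀ j, IsClosed (X j)) (hXcv : ∀ j, Convex ℝ (X j))
    (g : ∀ j, EuclideanSpace ℝ (Fin (m j)) → ℝ) (hg : ∀ j, ConvexOn ℝ Set.univ (g j))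
    (ft : ∀ j, EuclideanSpace ℝ (Fin (m j)) → TS n m → ℝ)
    (τ Lt : ℝ) (hτ : 0 < τ)
    -- `f̃_i(·, y)` is continuously differentiable for every `y ∈ X`
    (hC1 : ∀ i, ∀ y : TS n m, (∀ j, y j ∈ X j) → ContDiff ℝ 1 fun u => ft i u y)
    -- `f̃_i(·, y)` is `τ`-strongly convex on `X_i` for every `y ∈ X`
    (hsc : ∀ i, ∀ y : TS n m, (∀ j, y j ∈ X j) → ∀ u ∈ X i, ∀ u' ∈ X i,
      ft i u y ≥ ft i u' y + ⟪gradient (fun v => ft i v y) u', u - u'⟫ + τ / 2 * ‖u - u'‖ ^ 2)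
    -- `‖∇_{x_i} f̃_i(x_i, y) − ∇_{x_i} f̃_i(x_i, z)‖ ≤ L̃ ‖y − z‖`
    (hLip : ∀ i, ∀ xi ∈ X i, ∀ y z : TS n m, (∀ j, y j ∈ X j) → (∀ j, z j ∈ X j) →
      ‖gradient (fun v => ft i v y) xi - gradient (fun v => ft i v z) xi‖ ≤ Lt * ‖y - z‖)
    -- the best-response map `x̂`
    (xhat : TS n m → TS n m)
    (hxhat : ∀ y : TS n m, (∀ j, y j ∈ X j) → ∀ i,
      xhat y i ∈ X i ∧ IsMinOn (fun u => ft i u y + g i u) (X i) (xhat y i)) :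
    ∀ y z : TS n m, (∀ j, y j ∈ X j) → (∀ j, z j ∈ X j) →
      ‖xhat y - xhat z‖ ≤ Real.sqrt n * Lt / τ * ‖y - z‖ := by
  intro y z hy hz
  -- the per-coordinate Lipschitz bound
  have coord : ∀ i, ‖xhat y i - xhat z i‖ ≤ Lt / τ * ‖y - z‖ := by
    intro i
    set u := xhat y i with hu'
    set v := xhat z i with hv'
    obtain ⟨hu, hminu⟩ := hxhat y hy i
    obtain ⟨hv, hminv⟩ := hxhat z hz i
    have hq1 : ft i u y + g i u + τ / 2 * ‖v - u‖ ^ 2 ≤ ft i v y + g i v :=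
      quad_growth (X i) (hXcv i) (fun w => ft i w y) (g i) (hg i) τ
        (fun a ha b hb => hsc i y hy a ha b hb) u hu hminu v hv
    have hq2 : ft i v z + g i v + τ / 2 * ‖u - v‖ ^ 2 ≤ ft i u z + g i u :=
      quad_growth (X i) (hXcv i) (fun w => ft i w z) (g i) (hg i) τ
        (fun a ha b hb => hsc i z hz a ha b hb) v hv hminv u hu
    -- mean value bound on ψ = ft i · y - ft i · z
    have hdy : Differentiable ℝ (fun w => ft i w y) := (hC1 i y hy).differentiable one_ne_zero
    have hdz : Differentiable ℝ (fun w => ft i w z) := (hC1 i z hz).differentiable one_ne_zero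
    have hmvt : ‖(ft i v y - ft i v z) - (ft i u y - ft i u z)‖ ≤ (Lt * ‖y - z‖) * ‖v - u‖ := by
      apply (hXcv i).norm_image_sub_le_of_norm_fderiv_le
        (f := fun w => ft i w y - ft i w z)
        (fun x _ => ((hdy x).sub (hdz x)))
        (fun x hx => ?_) hu hv
      have hfd : fderiv ℝ (fun w => ft i w y - ft i w z) x
          = fderiv ℝ (fun w => ft i w y) x - fderiv ℝ (fun w => ft i w z) x :=
        fderiv_sub (hdy x) (hdz x)
      rw [hfd]
      have : ‖fderiv ℝ (fun w => ft i w y) x - fderiv ℝ (fun w => ft i w z) x‖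
          = ‖gradient (fun w => ft i w y) x - gradient (fun w => ft i w z) x‖ := by
        unfold gradient
        rw [← map_sub, LinearIsometryEquiv.norm_map]
      rw [this]
      exact hLip i x hx y z hy hz
    have hC0 : 0 ≤ Lt * ‖y - z‖ := by
      have := hLip i u hu y z hy hz
      exact le_trans (norm_nonneg _) this
    have hnvu : ‖u - v‖ = ‖v - u‖ := by rw [← neg_sub, norm_neg]
    have hτd : τ * ‖v - u‖ ^ 2 ≤ (Lt * ‖y - z‖) * ‖v - u‖ := by
      have habs : (ft i v y - ft i v z) - (ft i u y - ft i u z)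
          ≤ (Lt * ‖y - z‖) * ‖v - u‖ := le_trans (le_abs_self _) hmvt
      rw [hnvu] at hq2
      nlinarith [hq1, hq2]
    rcases eq_or_lt_of_le (norm_nonneg (v - u)) with h0 | h0
    · rw [hnvu, ← h0]
      rw [div_mul_eq_mul_div]
      exact div_nonneg hC0 hτ.le
    · rw [hnvu]
      rw [div_mul_eq_mul_div, le_div_iff₀ hτ]
      nlinarith
  -- sum up over coordinates
  have hnorm2 : ‖xhat y - xhat z‖ ^ 2 = ∑ i, ‖xhat y i - xhat z i‖ ^ 2 := by
    rw [PiLp.norm_sq_eq_of_L2]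
    rfl
  have hC0 : 0 ≤ Lt / τ * ‖y - z‖ := by
    rcases Nat.eq_zero_or_pos n with hn | hn
    · -- n = 0 : then y = z since Fin 0 empty? no; instead ‖y-z‖ : need nonneg of Lt*...
      subst hn
      have : y - z = 0 := by
        ext i
        exact absurd i.2 (Nat.not_lt_zero _)
      rw [this, norm_zero, mul_zero]
    · have i0 : Fin n := ⟨0, hn⟩
      obtain ⟨xi, hxi⟩ := hXne i0
      have h1 := le_trans (norm_nonneg _) (hLip i0 xi hxi y z hy hz)
      have : 0 ≤ Lt / τ * ‖y - z‖ := by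
        rw [div_mul_eq_mul_div]
        exact div_nonneg h1 hτ.le
      exact this
  have hsum : ‖xhat y - xhat z‖ ^ 2 ≤ n * (Lt / τ * ‖y - z‖) ^ 2 := by
    rw [hnorm2]
    calc ∑ i, ‖xhat y i - xhat z i‖ ^ 2 ≤ ∑ _i : Fin n, (Lt / τ * ‖y - z‖) ^ 2 :=
          Finset.sum_le_sum fun i _ => pow_le_pow_left₀ (norm_nonneg _) (coord i) 2
      _ = n * (Lt / τ * ‖y - z‖) ^ 2 := by
          rw [Finset.sum_const, Finset.card_univ, Fintype.card_fin, nsmul_eq_mul]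
  have hRHS : Real.sqrt n * Lt / τ * ‖y - z‖ = Real.sqrt n * (Lt / τ * ‖y - z‖) := by ring
  have hRnn : 0 ≤ Real.sqrt n * (Lt / τ * ‖y - z‖) :=
    mul_nonneg (Real.sqrt_nonneg _) hC0
  rw [hRHS]
  have hsq : (Real.sqrt n * (Lt / τ * ‖y - z‖)) ^ 2 = n * (Lt / τ * ‖y - z‖) ^ 2 := by
    rw [mul_pow, Real.sq_sqrt (Nat.cast_nonneg n)]
  calc ‖xhat y - xhat z‖ = Real.sqrt (‖xhat y - xhat z‖ ^ 2) :=
        (Real.sqrt_sq (norm_nonneg _)).symm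
    _ ≤ Real.sqrt (n * (Lt / τ * ‖y - z‖) ^ 2) := Real.sqrt_le_sqrt hsum
    _ = Real.sqrt ((Real.sqrt n * (Lt / τ * ‖y - z‖)) ^ 2) := by rw [hsq]
    _ = Real.sqrt n * (Lt / τ * ‖y - z‖) := Real.sqrt_sq hRnn
end
end

section
/- Let X_i ⊆ ℝ^{m_i} be nonempty closed convex, X = ∏_{j=1}^n X_j, let f : ℝ^N → ℝ be continuously differentiable, g_i : ℝ^{m_i} → ℝ convex, and let f̃_i : X_i × X → ℝ be such that f̃_i(·,x) is continuously differentiable and τ-strongly convex on X_i and satisfies the gradient consistency condition ∇_{x_i} f̃_i(x_i, x) = ∇_{x_i} f(x) for all x ∈ X (where x_i is the i-th block of x). Fix x ∈ X and let x̂_i = argmin_{u ∈ X_i} f̃_i(u,x) + g_i(u). Then ⟨∇_{x_i} f(x), x̂_i − x_i⟩ + g_i(x̂_i) − g_i(x_i) ≤ −τ‖x̂_i − x_i‖². -/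
open scoped RealInnerProductSpace
open Filter Topology Finset

noncomputable section

private lemma stmt2_aux1 (t B a b c e fu gu K : ℝ) (ht0 : 0 < t)
    (hB : B = a - b + c - e)
    (hmin : a + c ≤ fu + gu)
    (hgc : gu ≤ (1 - t) * c + t * e)
    (hcomb : fu ≤ t * b + (1 - t) * a - K) :
    t * B ≤ t * (-K / t) := by
  have h : t * B ≤ -K := by nlinarith
  rw [mul_div_cancel₀ _ (ne_of_gt ht0)]; exact h

private lemma stmt2_aux2 (t B τ d ε : ℝ) (hτ : 0 < τ)
    (hK : B ≤ -(τ/2) * (1 - t) * d ^ 2)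
    (hε : 0 ≤ ε)
    (hle : t * (τ * d ^ 2) ≤ ε) :
    B ≤ -(τ/2) * d ^ 2 + ε := by
  have h : -(τ/2) * (1 - t) * d ^ 2 = -(τ/2) * d ^ 2 + (t * (τ * d ^ 2)) / 2 := by ring
  linarith

/-- Descent property of the best response direction:
`⟨∇_{x_i} f(x), x̂_i − x_i⟩ + g_i(x̂_i) − g_i(x_i) ≤ −τ ‖x̂_i − x_i‖²`.
Here the partial gradient `∇_{x_i} f(x)` is the `i`-th block of the full gradient. -/
theorem stmt2
    {n : ℕ} {m : Fin n → ℕ} (i : Fin n)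
    (X : ∀ j, Set (EuclideanSpace ℝ (Fin (m j))))
    (hXne : ∀ j, (X j).Nonempty) (hXcl : ∀ j, IsClosed (X j)) (hXcv : ∀ j, Convex ℝ (X j))
    (f : TS n m → ℝ) (hf : ContDiff ℝ 1 f)
    (g : EuclideanSpace ℝ (Fin (m i)) → ℝ) (hg : ConvexOn ℝ Set.univ g)
    (ft : EuclideanSpace ℝ (Fin (m i)) → TS n m → ℝ)
    (τ : ℝ) (hτ : 0 < τ)
    -- `f̃_i(·, y)` is continuously differentiable for every `y ∈ X`
    (hC1 : ∀ y : TS n m, (∀ j, y j ∈ X j) → ContDiff ℝ 1 fun u => ft u y)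
    -- `f̃_i(·, y)` is `τ`-strongly convex on `X_i` for every `y ∈ X`
    (hsc : ∀ y : TS n m, (∀ j, y j ∈ X j) → ∀ u ∈ X i, ∀ u' ∈ X i,
      ft u y ≥ ft u' y + ⟪gradient (fun v => ft v y) u', u - u'⟫ + τ / 2 * ‖u - u'‖ ^ 2)
    -- gradient consistency: `∇_{x_i} f̃_i(x_i, x) = ∇_{x_i} f(x)` for all `x ∈ X`
    (hgc : ∀ x : TS n m, (∀ j, x j ∈ X j) →
      gradient (fun u => ft u x) (x i) = gradient f x i)
    -- a fixed point `x ∈ X` and the best response `x̂_i`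
    (x : TS n m) (hx : ∀ j, x j ∈ X j)
    (xhat : EuclideanSpace ℝ (Fin (m i))) (hxhatX : xhat ∈ X i)
    (hxhat : IsMinOn (fun u => ft u x + g u) (X i) xhat) :
    ⟪gradient f x i, xhat - x i⟫ + g xhat - g (x i) ≤ -τ * ‖xhat - x i‖ ^ 2 := by
  by_cases hd : xhat = x i
  · simp [hd]
  have hxi : x i ∈ X i := hx i
  obtain ⟨d, hdd⟩ : ∃ d : ℝ, d = ‖xhat - x i‖ := ⟨_, rfl⟩
  have hd0 : 0 < d := by
    rw [hdd, norm_pos_iff]; exact sub_ne_zero.mpr hd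
  obtain ⟨B, hB⟩ : ∃ B : ℝ, B = ft xhat x - ft (x i) x + g xhat - g (x i) := ⟨_, rfl⟩
  have key : ∀ t : ℝ, 0 < t → t < 1 → B ≤ -(τ/2) * (1 - t) * d ^ 2 := by
    intro t ht0 ht1
    set u := xhat + t • (x i - xhat) with hu
    have huX : u ∈ X i := (hXcv i).add_smul_sub_mem hxhatX hxi ⟨le_of_lt ht0, le_of_lt ht1⟩
    have hmin : ft xhat x + g xhat ≤ ft u x + g u := hxhat huX
    have hu2 : u = (1 - t) • xhat + t • (x i) := by rw [hu]; module
    have hgconv : g u ≤ (1 - t) * g xhat + t * g (x i) := by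
      rw [hu2]
      exact hg.2 (Set.mem_univ _) (Set.mem_univ _) (by linarith) (le_of_lt ht0) (by ring)
    have h1 := hsc x hx (x i) hxi u huX
    have h2 := hsc x hx xhat hxhatX u huX
    have e1 : x i - u = (1 - t) • (x i - xhat) := by rw [hu]; module
    have e2 : xhat - u = (-t) • (x i - xhat) := by rw [hu]; module
    have hrev : ‖x i - xhat‖ = d := by rw [hdd, norm_sub_rev]
    have n1 : ‖x i - u‖ ^ 2 = (1 - t) ^ 2 * d ^ 2 := by
      rw [e1, norm_smul, hrev, Real.norm_eq_abs, abs_of_nonneg (by linarith)]; ring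
    have n2 : ‖xhat - u‖ ^ 2 = t ^ 2 * d ^ 2 := by
      rw [e2, norm_smul, hrev, Real.norm_eq_abs, abs_of_neg (by linarith)]; ring
    set G := gradient (fun v => ft v x) with hG
    have hinner : t * ⟪G u, x i - u⟫ + (1 - t) * ⟪G u, xhat - u⟫ = 0 := by
      have h3 : t * ⟪G u, x i - u⟫ + (1 - t) * ⟪G u, xhat - u⟫
          = ⟪G u, t • (x i - u) + (1 - t) • (xhat - u)⟫ := by
        rw [inner_add_right, inner_smul_right, inner_smul_right]
      have h4 : t • (x i - u) + (1 - t) • (xhat - u) = 0 := by rw [hu]; module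
      rw [h3, h4, inner_zero_right]
    have hcomb : ft u x ≤ t * ft (x i) x + (1 - t) * ft xhat x
        - τ/2 * (t * (1 - t)) * d ^ 2 := by
      have H1 : t * (ft u x + ⟪G u, x i - u⟫ + τ/2 * ‖x i - u‖^2) ≤ t * ft (x i) x :=
        mul_le_mul_of_nonneg_left h1 (le_of_lt ht0)
      have H2 : (1 - t) * (ft u x + ⟪G u, xhat - u⟫ + τ/2 * ‖xhat - u‖^2)
          ≤ (1 - t) * ft xhat x :=
        mul_le_mul_of_nonneg_left h2 (by linarith)
      rw [n1] at H1; rw [n2] at H2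
      nlinarith [hinner]
    have htB := stmt2_aux1 t B (ft xhat x) (ft (x i) x) (g xhat) (g (x i)) (ft u x) (g u)
      (τ/2 * (t * (1 - t)) * d ^ 2) ht0 hB hmin hgconv hcomb
    have := le_of_mul_le_mul_left htB ht0
    calc B ≤ -(τ/2 * (t * (1 - t)) * d ^ 2) / t := this
      _ = -(τ/2) * (1 - t) * d ^ 2 := by field_simp
  have hB2 : B ≤ -(τ/2) * d ^ 2 := by
    apply le_of_forall_pos_le_add
    intro ε hε
    have hden : 0 < τ * d ^ 2 := by positivity
    set t := min (1/2 : ℝ) (ε / (τ * d ^ 2)) with htdef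
    have ht0 : 0 < t := lt_min (by norm_num) (div_pos hε hden)
    have ht1 : t < 1 := lt_of_le_of_lt (min_le_left _ _) (by norm_num)
    have hK := key t ht0 ht1
    have hle : t * (τ * d ^ 2) ≤ ε := by
      have h5 : t ≤ ε / (τ * d ^ 2) := min_le_right _ _
      calc t * (τ * d ^ 2) ≤ (ε / (τ * d ^ 2)) * (τ * d ^ 2) :=
            mul_le_mul_of_nonneg_right h5 (le_of_lt hden)
        _ = ε := div_mul_cancel₀ _ (ne_of_gt hden)
    exact stmt2_aux2 t B τ d ε hτ hK hε.le hle
  have hA := hsc x hx xhat hxhatX (x i) hxi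
  rw [hgc x hx] at hA
  rw [← hdd] at hA
  have h6 : ⟪gradient f x i, xhat - x i⟫ ≤ ft xhat x - ft (x i) x - τ/2 * d ^ 2 := by linarith
  rw [← hdd]
  rw [hB] at hB2
  linarith [h6, hB2]
end
end

section
/- Let X_i ⊆ ℝ^{m_i} be nonempty closed convex, X = ∏_{j=1}^n X_j, let f : ℝ^N → ℝ be continuously differentiable with ∇f Lipschitz continuous with constant L_{∇f}, let g_i : ℝ^{m_i} → ℝ be convex, and set h(x) = f(x) + Σ_{i=1}^n g_i(x_i). Let f̃_i : X_i × X → ℝ satisfy: f̃_i(·,x) is continuously differentiable and τ-strongly convex on X_i, and ∇_{x_i} f̃_i(x_i, x) = ∇_{x_i} f(x) for all x ∈ X (gradient consistency). Fix x ∈ X, a subset S ⊆ {1,…,n}, a step-size γ ∈ (0,1], and let x̂_i = argmin_{u ∈ X_i} f̃_i(u,x) + g_i(u) for i ∈ S. Define x′ by x′_i = x_i + γ(x̂_i − x_i) for i ∈ S and x′_i = x_i for i ∉ S. Then x′ ∈ X and h(x′) ≤ h(x) + (γ(γ L_{∇f} − τ)/2) Σ_{i∈S} ‖x̂_i − x_i‖².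 -/
open scoped RealInnerProductSpace
open Filter Topology Finset

noncomputable section

lemma descent {F : Type*} [NormedAddCommGroup F] [InnerProductSpace ℝ F] [CompleteSpace F]
    (f : F → ℝ) (hf : Differentiable ℝ f) (L : ℝ)
    (hL : ∀ a b, ‖gradient f a - gradient f b‖ ≤ L * ‖a - b‖) (a b : F) :
    f b ≤ f a + ⟪gradient f a, b - a⟫ + L / 2 * ‖b - a‖ ^ 2 := by
  set v := b - a with hv
  set c := ⟪gradient f a, v⟫ with hc
  have hline : ∀ t : ℝ, HasDerivAt (fun t => f (a + t • v)) ⟪gradient f (a + t • v), v⟫ t := by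
    intro t
    have h2 : HasDerivAt (fun t : ℝ => a + t • v) v t := by
      simpa using ((hasDerivAt_id t).smul_const v).const_add a
    have h1 := ((hf (a + t • v)).hasGradientAt).hasFDerivAt
    have := h1.comp_hasDerivAt t h2
    simpa [InnerProductSpace.toDual_apply_apply, Function.comp_def] using this
  have hBder : ∀ t : ℝ, HasDerivAt (fun t : ℝ => f a + t * c + L / 2 * ‖v‖ ^ 2 * t ^ 2)
      (c + L / 2 * ‖v‖ ^ 2 * (2 * t)) t := by
    intro t
    have h1 : HasDerivAt (fun t : ℝ => t * c) c t := by simpa using (hasDerivAt_id t).mul_const c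
    have h2 : HasDerivAt (fun t : ℝ => t ^ 2) (2 * t) t := by simpa using hasDerivAt_pow 2 t
    exact (h1.const_add (f a)).add (h2.const_mul (L / 2 * ‖v‖ ^ 2))
  have key : ∀ ⦃t⦄, t ∈ Set.Icc (0:ℝ) 1 →
      f (a + t • v) ≤ f a + t * c + L / 2 * ‖v‖ ^ 2 * t ^ 2 := by
    apply image_le_of_deriv_right_le_deriv_boundary
    · exact fun t _ => ((hline t).continuousAt).continuousWithinAt
    · exact fun t _ => (hline t).hasDerivWithinAt
    · simp
    · exact fun t _ => ((hBder t).continuousAt).continuousWithinAt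
    · exact fun t _ => (hBder t).hasDerivWithinAt
    · intro t ht
      have h1 : ⟪gradient f (a + t • v) - gradient f a, v⟫ ≤ L * t * ‖v‖ ^ 2 := by
        calc ⟪gradient f (a + t • v) - gradient f a, v⟫
            ≤ ‖gradient f (a + t • v) - gradient f a‖ * ‖v‖ := real_inner_le_norm _ _
          _ ≤ (L * ‖(a + t • v) - a‖) * ‖v‖ := by
              exact mul_le_mul_of_nonneg_right (hL _ _) (norm_nonneg v)
          _ = L * t * ‖v‖ ^ 2 := by
              rw [add_sub_cancel_left, norm_smul, Real.norm_of_nonneg ht.1]; ring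
      have h2 : ⟪gradient f (a + t • v), v⟫ = c + ⟪gradient f (a + t • v) - gradient f a, v⟫ := by
        rw [hc, inner_sub_left]; ring
      rw [h2]; nlinarith [h1]
  have := key (Set.mem_Icc.mpr ⟨zero_le_one, le_refl 1⟩)
  simpa [hv] using this


/-- **one-step sufficient decrease.** If `x'_i = x_i + γ(x̂_i − x_i)` for
`i ∈ S` and `x'_i = x_i` otherwise, then `x' ∈ X` and
`h(x') ≤ h(x) + (γ(γ L_{∇f} − τ)/2) Σ_{i ∈ S} ‖x̂_i − x_i‖²`, where
`h(x) = f(x) + Σ_i g_i(x_i)`. -/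
theorem stmt3
    {n : ℕ} {m : Fin n → ℕ}
    (X : ∀ j, Set (EuclideanSpace ℝ (Fin (m j))))
    (hXne : ∀ j, (X j).Nonempty) (hXcl : ∀ j, IsClosed (X j)) (hXcv : ∀ j, Convex ℝ (X j))
    (f : TS n m → ℝ) (hf : ContDiff ℝ 1 f)
    (Lf : ℝ)
    -- `∇f` is Lipschitz continuous with constant `L_{∇f}`
    (hfL : ∀ a b : TS n m, ‖gradient f a - gradient f b‖ ≤ Lf * ‖a - b‖)
    (g : ∀ j, EuclideanSpace ℝ (Fin (m j)) → ℝ) (hg : ∀ j, ConvexOn ℝ Set.univ (g j))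
    (ft : ∀ j, EuclideanSpace ℝ (Fin (m j)) → TS n m → ℝ)
    (τ : ℝ) (hτ : 0 < τ)
    -- `f̃_i(·, y)` is continuously differentiable and `τ`-strongly convex on `X_i`
    (hC1 : ∀ i, ∀ y : TS n m, (∀ j, y j ∈ X j) → ContDiff ℝ 1 fun u => ft i u y)
    (hsc : ∀ i, ∀ y : TS n m, (∀ j, y j ∈ X j) → ∀ u ∈ X i, ∀ u' ∈ X i,
      ft i u y ≥ ft i u' y + ⟪gradient (fun v => ft i v y) u', u - u'⟫ + τ / 2 * ‖u - u'‖ ^ 2)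
    -- gradient consistency: `∇_{x_i} f̃_i(x_i, x) = ∇_{x_i} f(x)` for all `x ∈ X`
    (hgc : ∀ i, ∀ x : TS n m, (∀ j, x j ∈ X j) →
      gradient (fun u => ft i u x) (x i) = gradient f x i)
    -- the current point, block set, step-size and best responses
    (x : TS n m) (hx : ∀ j, x j ∈ X j)
    (S : Finset (Fin n)) (γ : ℝ) (hγ0 : 0 < γ) (hγ1 : γ ≤ 1)
    (xhat : ∀ j, EuclideanSpace ℝ (Fin (m j)))
    (hxhat : ∀ i ∈ S, xhat i ∈ X i ∧ IsMinOn (fun u => ft i u x + g i u) (X i) (xhat i))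
    (x' : TS n m)
    (hx' : ∀ j, x' j = if j ∈ S then x j + γ • (xhat j - x j) else x j) :
    (∀ j, x' j ∈ X j) ∧
    f x' + ∑ i, g i (x' i) ≤
      f x + ∑ i, g i (x i) + γ * (γ * Lf - τ) / 2 * ∑ i ∈ S, ‖xhat i - x i‖ ^ 2 := by

  have hgrad : Differentiable ℝ f := hf.differentiable one_ne_zero
  have hmem : ∀ j, x' j ∈ X j := by
    intro j
    rw [hx' j]
    split_ifs with hj
    · have heq : x j + γ • (xhat j - x j) = (1 - γ) • x j + γ • xhat j := by module
      rw [heq]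
      exact hXcv j (hx j) ((hxhat j hj).1) (by linarith) (le_of_lt hγ0) (by ring)
    · exact hx j
  refine ⟨hmem, ?_⟩
  -- per-block key inequality
  have hkey : ∀ i ∈ S,
      ⟪gradient f x i, xhat i - x i⟫ + (g i (xhat i) - g i (x i)) ≤ -(τ / 2) * ‖xhat i - x i‖ ^ 2 := by
    intro i hi
    obtain ⟨hm, hmin⟩ := hxhat i hi
    have hs := hsc i x hx (xhat i) hm (x i) (hx i)
    rw [hgc i x hx] at hs
    have hmin' : ft i (xhat i) x + g i (xhat i) ≤ ft i (x i) x + g i (x i) :=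
      isMinOn_iff.mp hmin (x i) (hx i)
    linarith [hs]
  -- differences of blocks
  have hxs : ∀ j, x' j - x j = if j ∈ S then γ • (xhat j - x j) else 0 := by
    intro j; rw [hx' j]; split_ifs <;> simp
  -- inner product decomposition
  have hinner : ⟪gradient f x, x' - x⟫ = γ * ∑ i ∈ S, ⟪gradient f x i, xhat i - x i⟫ := by
    have h1 : ⟪gradient f x, x' - x⟫ = ∑ j, ⟪gradient f x j, x' j - x j⟫ := by
      rw [PiLp.inner_apply]
      exact Finset.sum_congr rfl fun j _ => by rw [PiLp.sub_apply]
    rw [h1, Finset.mul_sum, ← Finset.sum_subset (Finset.subset_univ S)]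
    · exact Finset.sum_congr rfl fun j hj => by
        rw [hxs j, if_pos hj, real_inner_smul_right]
    · intro j _ hj
      rw [hxs j, if_neg hj, inner_zero_right]
  -- norm decomposition
  have hnorm : ‖x' - x‖ ^ 2 = γ ^ 2 * ∑ i ∈ S, ‖xhat i - x i‖ ^ 2 := by
    rw [PiLp.norm_sq_eq_of_L2, Finset.mul_sum, ← Finset.sum_subset (Finset.subset_univ S)]
    · refine Finset.sum_congr rfl fun j hj => ?_
      rw [PiLp.sub_apply, hxs j, if_pos hj, norm_smul, Real.norm_of_nonneg (le_of_lt hγ0),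
        mul_pow]
    · intro j _ hj
      rw [PiLp.sub_apply, hxs j, if_neg hj, norm_zero]
      ring
  -- descent lemma
  have hd : f x' ≤ f x + ⟪gradient f x, x' - x⟫ + Lf / 2 * ‖x' - x‖ ^ 2 :=
    descent f hgrad Lf hfL x x'
  -- g sum bound
  have hgsum : ∑ i, g i (x' i) ≤ ∑ i, g i (x i) + γ * ∑ i ∈ S, (g i (xhat i) - g i (x i)) := by
    have hterm : ∀ i, g i (x' i) ≤
        g i (x i) + (if i ∈ S then γ * (g i (xhat i) - g i (x i)) else 0) := by
      intro i
      rw [hx' i]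
      split_ifs with hi
      · have hcv := (hg i).2 (Set.mem_univ (x i)) (Set.mem_univ (xhat i))
          (by linarith : (0:ℝ) ≤ 1 - γ) (le_of_lt hγ0) (by ring : (1 - γ) + γ = 1)
        have heq : x i + γ • (xhat i - x i) = (1 - γ) • x i + γ • xhat i := by module
        rw [heq]
        rw [smul_eq_mul, smul_eq_mul] at hcv
        linarith
      · simp
    calc ∑ i, g i (x' i)
        ≤ ∑ i, (g i (x i) + if i ∈ S then γ * (g i (xhat i) - g i (x i)) else 0) :=
          Finset.sum_le_sum fun i _ => hterm i
      _ = ∑ i, g i (x i) + γ * ∑ i ∈ S, (g i (xhat i) - g i (x i)) := by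
          rw [Finset.sum_add_distrib, Finset.sum_ite_mem, Finset.univ_inter, Finset.mul_sum]
  -- combine
  have hsum : ∑ i ∈ S, ⟪gradient f x i, xhat i - x i⟫ + ∑ i ∈ S, (g i (xhat i) - g i (x i))
      ≤ -(τ / 2) * ∑ i ∈ S, ‖xhat i - x i‖ ^ 2 := by
    rw [Finset.mul_sum, ← Finset.sum_add_distrib]
    exact Finset.sum_le_sum fun i hi => hkey i hi
  have hT : (0:ℝ) ≤ ∑ i ∈ S, ‖xhat i - x i‖ ^ 2 :=
    Finset.sum_nonneg fun i _ => sq_nonneg _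
  rw [hinner, hnorm] at hd
  nlinarith [hd, hgsum, hsum, mul_le_mul_of_nonneg_left hsum (le_of_lt hγ0)]
end
end

section
/- Let (Δ^r)_{r≥0} be a sequence of nonnegative reals and (γ^r)_{r≥0} a sequence in (0,1] such that Σ_{r=0}^∞ γ^r = +∞ and Σ_{r=0}^∞ γ^r (Δ^r)² < +∞. Suppose there is a constant C > 0 such that |Δ^{r+1} − Δ^r| ≤ C γ^r Δ^r for all r, and limsup_{r→∞} γ^r < 1/C. Then lim_{r→∞} Δ^r = 0. -/
open Filter Topology

/-- If `(Δ^r)` is nonnegative, `(γ^r) ⊆ (0,1]` with `Σ γ^r = ∞` and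
`Σ γ^r (Δ^r)² < ∞`, `|Δ^{r+1} − Δ^r| ≤ C γ^r Δ^r` for some `C > 0`, and
`limsup γ^r < 1/C`, then `Δ^r → 0`. -/
theorem stmt4
    (Δ γ : ℕ → ℝ)
    (hΔ : ∀ r, 0 ≤ Δ r)
    (hγ : ∀ r, γ r ∈ Set.Ioc (0 : ℝ) 1)
    -- `Σ_{r} γ^r = +∞`
    (hdiv : ¬ Summable γ)
    -- `Σ_{r} γ^r (Δ^r)² < +∞`
    (hconv : Summable fun r => γ r * Δ r ^ 2)
    (C : ℝ) (hC : 0 < C)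
    (hstep : ∀ r, |Δ (r + 1) - Δ r| ≤ C * γ r * Δ r)
    (hlimsup : limsup γ atTop < 1 / C) :
    Tendsto Δ atTop (nhds 0) := by
  classical
  set f := fun r => γ r * Δ r ^ 2 with hf
  have hfnn : ∀ r, 0 ≤ f r := fun r => mul_nonneg (hγ r).1.le (sq_nonneg _)
  by_contra hT
  rw [Metric.tendsto_atTop] at hT
  push_neg at hT
  obtain ⟨ε, hε, hfreq⟩ := hT
  have hfreq' : ∀ N, ∃ n ≥ N, ε ≤ Δ n := by
    intro N
    obtain ⟨n, hn, hd⟩ := hfreq N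
    refine ⟨n, hn, ?_⟩
    rwa [Real.dist_eq, sub_zero, abs_of_nonneg (hΔ n)] at hd
  set δ := ε / 2 with hδdef
  have hδ : 0 < δ := by positivity
  -- liminf Δ = 0
  have hlow : ∀ N, ∃ n ≥ N, Δ n < δ := by
    intro N
    by_contra hc
    push_neg at hc
    apply hdiv
    have h1 : Summable (fun n => γ (n + N) * Δ (n + N) ^ 2) :=
      (summable_nat_add_iff (f := fun r => γ r * Δ r ^ 2) N).2 hconv
    have h2 : Summable (fun n => γ (n + N)) := by
      refine Summable.of_nonneg_of_le (fun n => (hγ _).1.le)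
        (fun n => ?_) (h1.mul_left (1 / δ ^ 2))
      have hd : δ ≤ Δ (n + N) := hc _ (Nat.le_add_left _ _)
      have hγp := (hγ (n + N)).1
      have hsq : δ ^ 2 ≤ Δ (n + N) ^ 2 := by nlinarith
      rw [div_mul_eq_mul_div, one_mul, le_div_iff₀ (by positivity)]
      nlinarith
    exact (summable_nat_add_iff (f := γ) N).1 h2
  -- eventually γ r < g with C * g < 1
  have hbddγ : IsBoundedUnder (· ≤ ·) atTop γ :=
    isBoundedUnder_of ⟨1, fun r => (hγ r).2⟩
  set L := limsup γ atTop with hL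
  set g := (L + 1 / C) / 2 with hg
  have hLg : L < g := by rw [hg]; linarith
  have hev : ∀ᶠ r in atTop, γ r < g := eventually_lt_of_limsup_lt hLg hbddγ
  obtain ⟨N0, hN0⟩ := eventually_atTop.1 hev
  set θ := C * g with hθ
  have hCinv : C * (1 / C) = 1 := mul_one_div_cancel hC.ne'
  have hθ1 : θ < 1 := by
    have : C * L < 1 := by
      have := (mul_lt_mul_iff_right₀ hC).2 hlimsup
      linarith
    rw [hθ, hg]; nlinarith
  set c := (1 - θ) * δ ^ 2 / C with hc
  have hcpos : 0 < c := div_pos (mul_pos (by linarith) (by positivity)) hC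
  -- tail bound
  have hS := hconv.hasSum.tendsto_sum_nat
  have hev2 : ∀ᶠ n in atTop, (∑' r, f r) - c < ∑ i ∈ Finset.range n, f i :=
    hS.eventually (eventually_gt_nhds (by linarith))
  obtain ⟨N1, hN1⟩ := eventually_atTop.1 hev2
  -- telescoping estimate
  have tele : ∀ a b, a ≤ b → Δ b - Δ a ≤ ∑ j ∈ Finset.Ico a b, C * γ j * Δ j := by
    intro a b hab
    induction b, hab using Nat.le_induction with
    | base => simp
    | succ b hab ih =>
      rw [Finset.sum_Ico_succ_top hab]
      have h2 := abs_le.1 (hstep b)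
      linarith [h2.2]
  -- construct an upcrossing interval past N := max N0 N1
  set N := max N0 N1 with hN
  obtain ⟨p, hp, hpδ⟩ := hlow N
  obtain ⟨n, hn, hnε⟩ := hfreq' (p + 1)
  have hpn : p < n := lt_of_lt_of_le (Nat.lt_succ_self p) hn
  set s := (Finset.Ico p n).filter (fun j => Δ j < δ) with hs
  have hps : p ∈ s := by
    simp only [hs, Finset.mem_filter, Finset.mem_Ico]
    exact ⟨⟨le_rfl, hpn⟩, hpδ⟩
  have hsne : s.Nonempty := ⟨p, hps⟩
  set m := s.max' hsne with hmdef
  have hm : (p ≤ m ∧ m < n) ∧ Δ m < δ := by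
    have := s.max'_mem hsne
    simpa only [hs, Finset.mem_filter, Finset.mem_Ico] using this
  have hmax : ∀ j, m < j → j < n → δ ≤ Δ j := by
    intro j hj1 hj2
    by_contra hlt
    push_neg at hlt
    have hjs : j ∈ s := by
      simp only [hs, Finset.mem_filter, Finset.mem_Ico]
      exact ⟨⟨le_trans hm.1.1 hj1.le, hj2⟩, hlt⟩
    exact absurd (Finset.le_max' s j hjs) (not_le.2 hj1)
  have h1 : δ < Δ n - Δ m := by
    have h2 := hm.2
    rw [hδdef] at h2 ⊢
    linarith
  have h2 : δ < ∑ j ∈ Finset.Ico m n, C * γ j * Δ j :=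
    lt_of_lt_of_le h1 (tele m n hm.1.2.le)
  have hsplit := Finset.sum_eq_sum_Ico_succ_bot hm.1.2 (fun j => C * γ j * Δ j)
  have hγm : γ m < g := hN0 m (le_trans (le_max_left _ _) (le_trans hp hm.1.1))
  have hθm : C * γ m * Δ m ≤ θ * δ := by
    have h3 := (hγ m).1
    have h4 := hΔ m
    have h5 := hm.2
    rw [hθ]
    nlinarith [mul_pos (mul_pos hC h3) (sub_pos.2 h5),
      mul_pos (mul_pos hC (sub_pos.2 hγm)) hδ]
  have hT2 : (1 - θ) * δ < ∑ j ∈ Finset.Ico (m + 1) n, C * γ j * Δ j := by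
    rw [hsplit] at h2
    linarith
  have hsum2 : δ / C * ∑ j ∈ Finset.Ico (m + 1) n, C * γ j * Δ j ≤
      ∑ j ∈ Finset.Ico (m + 1) n, f j := by
    rw [Finset.mul_sum]
    apply Finset.sum_le_sum
    intro j hj
    simp only [Finset.mem_Ico] at hj
    have hδj : δ ≤ Δ j := hmax j hj.1 hj.2
    have hγj := (hγ j).1
    have heq : δ / C * (C * γ j * Δ j) = δ * (γ j * Δ j) := by
      field_simp
    rw [heq]
    have hfj : f j = γ j * Δ j ^ 2 := rfl
    rw [hfj]
    nlinarith [mul_nonneg hγj.le (mul_nonneg (hΔ j) (sub_nonneg.2 hδj))]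
  have h3 : c < ∑ j ∈ Finset.Ico (m + 1) n, f j := by
    have h4 := mul_lt_mul_of_pos_left hT2 (div_pos hδ hC)
    have heq : c = δ / C * ((1 - θ) * δ) := by
      rw [hc]; field_simp
    linarith
  -- but this sum is part of a small tail
  have hN1m : N1 ≤ m + 1 :=
    le_trans (le_max_right N0 N1) (le_trans hp (Nat.le_succ_of_le hm.1.1))
  have hsub : ∑ j ∈ Finset.Ico (m + 1) n, f j ≤ ∑ j ∈ Finset.Ico N1 n, f j :=
    Finset.sum_le_sum_of_subset_of_nonneg (Finset.Ico_subset_Ico hN1m le_rfl)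
      (fun j _ _ => hfnn j)
  have hIco : ∑ j ∈ Finset.Ico N1 n, f j =
      ∑ j ∈ Finset.range n, f j - ∑ j ∈ Finset.range N1, f j :=
    Finset.sum_Ico_eq_sub _ (le_trans hN1m hm.1.2)
  have hle : ∑ j ∈ Finset.range n, f j ≤ ∑' r, f r :=
    Summable.sum_le_tsum (Finset.range n) (fun j _ => hfnn j) hconv
  have htail := hN1 N1 le_rfl
  linarith
end

section
/- Let X_i ⊆ ℝ^{m_i} be nonempty closed convex, X = ∏_{j=1}^n X_j, let f : ℝ^N → ℝ be continuously differentiable, g_i : ℝ^{m_i} → ℝ convex, and let f̃_i : X_i × X → ℝ be jointly continuous, with f̃_i(·,y) continuously differentiable and τ-strongly convex on X_i for each y ∈ X, satisfying gradient consistency ∇_{x_i} f̃_i(x_i, x) = ∇_{x_i} f(x) for all x ∈ X, and with y ↦ ∇_{x_i} f̃_i(x_i,y) Lipschitz on X with constant L̃ uniformly in x_i. Let x̂_i(y) = argmin_{u ∈ X_i} f̃_i(u,y) + g_i(u). Suppose (x^{r_j})_j is a sequence in X converging to x̄ ∈ X with lim_{j→∞} ‖x̂(x^{r_j}) − x^{r_j}‖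 = 0, where x̂(y) = (x̂_1(y),…,x̂_n(y)). Then x̄ is a stationary point of the problem min_{x∈X} f(x) + Σ_i g_i(x_i). -/
open scoped RealInnerProductSpace
open Filter Topology Finset

noncomputable section

lemma aux_subgrad {μ : ℕ} (X : Set (EuclideanSpace ℝ (Fin μ))) (hXcv : Convex ℝ X)
    (g : EuclideanSpace ℝ (Fin μ) → ℝ) (hg : ConvexOn ℝ Set.univ g)
    (a xb : EuclideanSpace ℝ (Fin μ)) (hxb : xb ∈ X)
    (hfo : ∀ u ∈ X, 0 ≤ ⟪a, u - xb⟫ + (g u - g xb)) :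
    ∃ d, (∀ u, g xb + ⟪d, u - xb⟫ ≤ g u) ∧ ∀ u ∈ X, 0 ≤ ⟪a + d, u - xb⟫ := by
  have hgcont : Continuous g := continuousOn_univ.mp (hg.continuousOn isOpen_univ)
  set ψ : EuclideanSpace ℝ (Fin μ) → ℝ := fun u => g u + ⟪a, u⟫ + -(g xb + ⟪a, xb⟫) with hψdef
  have hψxb : ψ xb = 0 := by
    show g xb + ⟪a, xb⟫ + -(g xb + ⟪a, xb⟫) = 0
    ring
  have hψeq : ∀ u, ψ u = g u - g xb + ⟪a, u - xb⟫ := by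
    intro u; simp [hψdef, inner_sub_right]; ring
  have hlin : ConvexOn ℝ Set.univ fun u : EuclideanSpace ℝ (Fin μ) => ⟪a, u⟫ :=
    ⟨convex_univ, fun x _ y _ p q hp hq hpq => by
      have h : (⟪a, p • x + q • y⟫ : ℝ) = p * ⟪a, x⟫ + q * ⟪a, y⟫ := by
        rw [inner_add_right, real_inner_smul_right, real_inner_smul_right]
      simpa [smul_eq_mul] using h.le⟩
  have hψconv : ConvexOn ℝ Set.univ ψ := by
    have h0 := (hg.add hlin).add
      (convexOn_const (-(g xb + ⟪a, xb⟫)) convex_univ)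
    have he : ψ = (g + fun u => ⟪a, u⟫) + fun _ => -(g xb + ⟪a, xb⟫) := rfl
    rw [he]; exact h0
  have hψcont : Continuous ψ :=
    (hgcont.add (continuous_const.inner continuous_id)).add continuous_const
  have hψnn : ∀ u ∈ X, 0 ≤ ψ u := by
    intro u hu
    rw [hψeq]
    have := hfo u hu
    linarith
  set C1 : Set (EuclideanSpace ℝ (Fin μ) × ℝ) := {p | ψ p.1 < p.2} with hC1def
  set C2 : Set (EuclideanSpace ℝ (Fin μ) × ℝ) := X ×ˢ Set.Iic (0:ℝ) with hC2def
  have hC1cv : Convex ℝ C1 := by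
    have := hψconv.convex_strict_epigraph
    convert this using 1
    ext p; simp [hC1def]
  have hC1op : IsOpen C1 := isOpen_lt (hψcont.comp continuous_fst) continuous_snd
  have hC2cv : Convex ℝ C2 := hXcv.prod (convex_Iic 0)
  have hdisj : Disjoint C1 C2 := by
    rw [Set.disjoint_left]
    rintro p hp1 hp2
    have h1 : ψ p.1 < p.2 := hp1
    obtain ⟨h2a, h2b⟩ := hp2
    have := hψnn p.1 h2a
    simp only [Set.mem_Iic] at h2b
    linarith
  obtain ⟨φ, c, hφ1, hφ2⟩ := geometric_hahn_banach_open hC1cv hC1op hC2cv hdisj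
  set β : ℝ := φ (0, 1) with hβdef
  have hsplit : ∀ u : EuclideanSpace ℝ (Fin μ), ∀ t : ℝ, φ (u, t) = φ (u, 0) + t * β := by
    intro u t
    have h : (u, t) = (u, (0:ℝ)) + t • ((0:EuclideanSpace ℝ (Fin μ)), (1:ℝ)) := by
      simp [Prod.ext_iff]
    rw [h, map_add, map_smul]; simp [hβdef]
  have hxb0 : c ≤ φ (xb, 0) := hφ2 (xb, 0) ⟨hxb, by simp⟩
  have hβneg : β < 0 := by
    have h1 : φ (xb, 1) < c := hφ1 (xb, 1) (by simp [hC1def, hψxb])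
    rw [hsplit] at h1; linarith
  have hkey : ∀ u : EuclideanSpace ℝ (Fin μ), φ (u, 0) + ψ u * β ≤ c := by
    intro u
    refine le_of_forall_pos_lt_add fun ε hε => ?_
    have hβ' : (0:ℝ) < -β := by linarith
    have hε' : 0 < ε / (-β) := by positivity
    have h1 : φ (u, ψ u + ε / (-β)) < c := hφ1 _ (by simp [hC1def]; linarith)
    rw [hsplit] at h1
    have hb : (ψ u + ε / (-β)) * β = ψ u * β - ε := by
      have hβ0 : β ≠ 0 := ne_of_lt hβneg
      field_simp
      ring
    rw [hb] at h1
    linarith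
  have hceq : φ (xb, 0) = c := by
    have := hkey xb
    rw [hψxb] at this
    simp at this
    linarith
  set p : EuclideanSpace ℝ (Fin μ) := (InnerProductSpace.toDual ℝ (EuclideanSpace ℝ (Fin μ))).symm (φ.comp (ContinuousLinearMap.inl ℝ (EuclideanSpace ℝ (Fin μ)) ℝ)) with hpdef
  have hp : ∀ u : EuclideanSpace ℝ (Fin μ), ⟪p, u⟫ = φ (u, 0) := by
    intro u
    rw [hpdef, InnerProductSpace.toDual_symm_apply]
    simp
  have hdiff : ∀ u : EuclideanSpace ℝ (Fin μ), φ (u, 0) = φ (xb, 0) + ⟪p, u - xb⟫ := by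
    intro u
    have h : (u, (0:ℝ)) = (u - xb, (0:ℝ)) + (xb, 0) := by simp
    rw [h, map_add, hp]
    ring
  have hβ' : (0:ℝ) < -β := by linarith
  refine ⟨(-β)⁻¹ • p - a, ?_, ?_⟩
  · intro u
    have h1 := hkey u
    rw [hdiff u, hceq] at h1
    -- ⟪p, u - xb⟫ + ψ u * β ≤ 0
    have hs : ⟪p, u - xb⟫ ≤ ψ u * (-β) := by linarith
    have h2 : (-β)⁻¹ * ⟪p, u - xb⟫ ≤ ψ u := by
      have := mul_le_mul_of_nonneg_left hs (le_of_lt (inv_pos.mpr hβ'))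
      rwa [mul_comm (ψ u) (-β), inv_mul_cancel_left₀ (ne_of_gt hβ')] at this
    have h3 : ⟪(-β)⁻¹ • p - a, u - xb⟫ = (-β)⁻¹ * ⟪p, u - xb⟫ - ⟪a, u - xb⟫ := by
      rw [inner_sub_left, real_inner_smul_left]
    rw [hψeq] at h2
    linarith [h3.le, h3.ge, h1]
  · intro u hu
    have h1 : c ≤ φ (u, 0) := hφ2 (u, 0) ⟨hu, by simp⟩
    rw [hdiff u, hceq] at h1
    have hs : 0 ≤ ⟪p, u - xb⟫ := by linarith
    have h3 : ⟪a + ((-β)⁻¹ • p - a), u - xb⟫ = (-β)⁻¹ * ⟪p, u - xb⟫ := by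
      rw [inner_add_left, inner_sub_left, real_inner_smul_left]
      ring
    rw [h3]
    positivity

/-- If a sequence in `X` converges to `x̄ ∈ X` and the best-response
residual `‖x̂(x^{r_j}) − x^{r_j}‖` tends to `0`, then `x̄` is a stationary point of
`min_{x ∈ X} f(x) + Σ_i g_i(x_i)`: there exists `d ∈ ∂g(x̄)` such that
`⟨∇f(x̄) + d, x − x̄⟩ ≥ 0` for all `x ∈ X`. -/
theorem stmt5
    {n : ℕ} {m : Fin n → ℕ}
    (X : ∀ j, Set (EuclideanSpace ℝ (Fin (m j))))
    (hXne : ∀ j, (X j).Nonempty) (hXcl : ∀ j, IsClosed (X j)) (hXcv : ∀ j, Convex ℝ (X j))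
    (f : TS n m → ℝ) (hf : ContDiff ℝ 1 f)
    (g : ∀ j, EuclideanSpace ℝ (Fin (m j)) → ℝ) (hg : ∀ j, ConvexOn ℝ Set.univ (g j))
    (ft : ∀ j, EuclideanSpace ℝ (Fin (m j)) → TS n m → ℝ)
    (τ Lt : ℝ) (hτ : 0 < τ)
    -- `f̃_i` is jointly continuous
    (hcont : ∀ i, Continuous fun p : EuclideanSpace ℝ (Fin (m i)) × TS n m => ft i p.1 p.2)
    -- `f̃_i(·, y)` is continuously differentiable and `τ`-strongly convex on `X_i`
    (hC1 : ∀ i, ∀ y : TS n m, (∀ j, y j ∈ X j) → ContDiff ℝ 1 fun u => ft i u y)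
    (hsc : ∀ i, ∀ y : TS n m, (∀ j, y j ∈ X j) → ∀ u ∈ X i, ∀ u' ∈ X i,
      ft i u y ≥ ft i u' y + ⟪gradient (fun v => ft i v y) u', u - u'⟫ + τ / 2 * ‖u - u'‖ ^ 2)
    -- gradient consistency: `∇_{x_i} f̃_i(x_i, x) = ∇_{x_i} f(x)` for all `x ∈ X`
    (hgc : ∀ i, ∀ x : TS n m, (∀ j, x j ∈ X j) →
      gradient (fun u => ft i u x) (x i) = gradient f x i)
    -- `y ↦ ∇_{x_i} f̃_i(x_i, y)` is Lipschitz on `X` with constant `L̃`, uniformly in `x_i`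
    (hLip : ∀ i, ∀ xi ∈ X i, ∀ y z : TS n m, (∀ j, y j ∈ X j) → (∀ j, z j ∈ X j) →
      ‖gradient (fun v => ft i v y) xi - gradient (fun v => ft i v z) xi‖ ≤ Lt * ‖y - z‖)
    -- the best-response map `x̂(y)`
    (xhat : TS n m → TS n m)
    (hxhat : ∀ y : TS n m, (∀ j, y j ∈ X j) → ∀ i,
      xhat y i ∈ X i ∧ IsMinOn (fun u => ft i u y + g i u) (X i) (xhat y i))
    -- a sequence in `X` converging to `x̄ ∈ X` with vanishing best-response residual
    (xs : ℕ → TS n m) (hxs : ∀ k j, xs k j ∈ X j)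
    (xbar : TS n m) (hxbar : ∀ j, xbar j ∈ X j)
    (hlim : Tendsto xs atTop (nhds xbar))
    (hres : Tendsto (fun k => ‖xhat (xs k) - xs k‖) atTop (nhds 0)) :
    ∃ d : TS n m,
      (∀ u : TS n m, (∑ i, g i (xbar i)) + ⟪d, u - xbar⟫ ≤ ∑ i, g i (u i)) ∧
      (∀ x : TS n m, (∀ j, x j ∈ X j) → 0 ≤ ⟪gradient f xbar + d, x - xbar⟫) := by
  classical
  have hgcont : ∀ i, Continuous (g i) := fun i =>
    continuousOn_univ.mp ((hg i).continuousOn isOpen_univ)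
  -- x̂(x^r) → x̄
  have hxhattend : Tendsto (fun k => xhat (xs k)) atTop (𝓝 xbar) := by
    have h1 : Tendsto (fun k => xhat (xs k) - xs k) atTop (𝓝 0) :=
      tendsto_zero_iff_norm_tendsto_zero.mpr hres
    have h2 := h1.add hlim
    simpa using h2
  -- x̄ᵢ minimizes ft i · x̄ + g i on X i
  have hmin : ∀ i, ∀ u ∈ X i, ft i (xbar i) xbar + g i (xbar i) ≤ ft i u xbar + g i u := by
    intro i u hu
    have hteni : Tendsto (fun k => xhat (xs k) i) atTop (𝓝 (xbar i)) :=
      ((PiLp.continuous_apply 2 _ i).tendsto xbar).comp hxhattend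
    have hLHS : Tendsto (fun k => ft i (xhat (xs k) i) (xs k) + g i (xhat (xs k) i))
        atTop (𝓝 (ft i (xbar i) xbar + g i (xbar i))) := by
      have h1 : Tendsto (fun k => (xhat (xs k) i, xs k)) atTop (𝓝 (xbar i, xbar)) :=
        hteni.prodMk_nhds hlim
      exact (((hcont i).tendsto _).comp h1).add (((hgcont i).tendsto _).comp hteni)
    have hRHS : Tendsto (fun k => ft i u (xs k) + g i u)
        atTop (𝓝 (ft i u xbar + g i u)) := by
      have h1 : Tendsto (fun k => ((u : EuclideanSpace ℝ (Fin (m i))), xs k))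
          atTop (𝓝 (u, xbar)) := tendsto_const_nhds.prodMk_nhds hlim
      exact (((hcont i).tendsto _).comp h1).add tendsto_const_nhds
    exact le_of_tendsto_of_tendsto' hLHS hRHS fun k =>
      isMinOn_iff.mp (hxhat (xs k) (hxs k) i).2 u hu
  -- first-order optimality
  have hfo : ∀ i, ∀ u ∈ X i,
      0 ≤ ⟪gradient (fun v => ft i v xbar) (xbar i), u - xbar i⟫ + (g i u - g i (xbar i)) := by
    intro i u hu
    set φg : EuclideanSpace ℝ (Fin (m i)) → EuclideanSpace ℝ (Fin (m i)) :=
      fun w => gradient (fun v => ft i v xbar) w with hφgdef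
    have hφgcont : Continuous φg := by
      have h1 : Continuous (fderiv ℝ fun v => ft i v xbar) :=
        (hC1 i xbar hxbar).continuous_fderiv one_ne_zero
      exact ((InnerProductSpace.toDual ℝ
        (EuclideanSpace ℝ (Fin (m i)))).symm.continuous.comp h1 : _)
    set v := u - xbar i with hvdef
    have key : ∀ t ∈ Set.Ioc (0:ℝ) 1,
        0 ≤ ⟪φg (xbar i + t • v), v⟫ + (g i u - g i (xbar i)) := by
      intro t ht
      have hut : xbar i + t • v ∈ X i := by
        have h := hXcv i (hxbar i) hu (by linarith [ht.2] : (0:ℝ) ≤ 1 - t) ht.1.le (by ring)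
        have he : (1 - t) • xbar i + t • u = xbar i + t • v := by
          rw [hvdef]; module
        rwa [he] at h
      have h1 := hsc i xbar hxbar (xbar i) (hxbar i) (xbar i + t • v) hut
      have h2 := hmin i (xbar i + t • v) hut
      have h3 : g i (xbar i + t • v) ≤ (1 - t) * g i (xbar i) + t * g i u := by
        have h := (hg i).2 (Set.mem_univ (xbar i)) (Set.mem_univ u)
          (by linarith [ht.2] : (0:ℝ) ≤ 1 - t) ht.1.le (by ring)
        have he : (1 - t) • xbar i + t • u = xbar i + t • v := by
          rw [hvdef]; module
        rw [he] at h
        simpa [smul_eq_mul] using h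
      have hip : ⟪φg (xbar i + t • v), xbar i - (xbar i + t • v)⟫
          = -(t * ⟪φg (xbar i + t • v), v⟫) := by
        have he : xbar i - (xbar i + t • v) = (-t) • v := by module
        rw [he, real_inner_smul_right]; ring
      have hnn : 0 ≤ τ / 2 * ‖xbar i - (xbar i + t • v)‖ ^ 2 := by positivity
      rw [hip] at h1
      -- h1 : ft i (xbar i) xbar ≥ ft i (xbar i + t•v) xbar - t*⟪...⟫ + nonneg
      have h4 : 0 ≤ t * (⟪φg (xbar i + t • v), v⟫ + (g i u - g i (xbar i))) := by
        nlinarith [h1, h2, h3, hnn]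
      have h5 := (mul_le_mul_iff_right₀ ht.1).mp (by linarith : t * 0 ≤ t * (⟪φg (xbar i + t • v), v⟫ + (g i u - g i (xbar i))))
      linarith
    have hcontt : Tendsto (fun t : ℝ => ⟪φg (xbar i + t • v), v⟫ + (g i u - g i (xbar i)))
        (𝓝[>] 0) (𝓝 (⟪φg (xbar i), v⟫ + (g i u - g i (xbar i)))) := by
      have hc : Continuous fun t : ℝ => ⟪φg (xbar i + t • v), v⟫ + (g i u - g i (xbar i)) := by
        apply Continuous.add _ continuous_const
        exact Continuous.inner
          (hφgcont.comp (continuous_const.add (continuous_id.smul continuous_const)))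
          continuous_const
      have h0 := hc.tendsto 0
      simp only [zero_smul, add_zero] at h0
      exact h0.mono_left nhdsWithin_le_nhds
    exact ge_of_tendsto hcontt (eventually_of_mem (Ioc_mem_nhdsGT one_pos) key)
  -- per-coordinate subgradient via separation
  have hsep : ∀ i, ∃ d : EuclideanSpace ℝ (Fin (m i)),
      (∀ u, g i (xbar i) + ⟪d, u - xbar i⟫ ≤ g i u) ∧
      ∀ u ∈ X i, 0 ≤ ⟪gradient f xbar i + d, u - xbar i⟫ := by
    intro i
    have h := aux_subgrad (X i) (hXcv i) (g i) (hg i)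
      (gradient (fun v => ft i v xbar) (xbar i)) (xbar i) (hxbar i) (hfo i)
    rwa [hgc i xbar hxbar] at h
  choose d hd1 hd2 using hsep
  set D : TS n m := (WithLp.equiv 2 (∀ i, EuclideanSpace ℝ (Fin (m i)))).symm d with hDdef
  have hDi : ∀ i, D i = d i := fun i => rfl
  refine ⟨D, ?_, ?_⟩
  · intro u
    have hinner : ⟪D, u - xbar⟫ = ∑ i, ⟪d i, u i - xbar i⟫ := by
      rw [PiLp.inner_apply]
      exact Finset.sum_congr rfl fun i _ => by rw [hDi, PiLp.sub_apply]
    rw [hinner, ← Finset.sum_add_distrib]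
    exact Finset.sum_le_sum fun i _ => hd1 i (u i)
  · intro x hx
    have hinner : ⟪gradient f xbar + D, x - xbar⟫
        = ∑ i, ⟪gradient f xbar i + d i, x i - xbar i⟫ := by
      rw [PiLp.inner_apply]
      exact Finset.sum_congr rfl fun i _ => by rw [PiLp.add_apply, hDi, PiLp.sub_apply]
    rw [hinner]
    exact Finset.sum_nonneg fun i _ => hd2 i (x i) (hx i)
end
end

section
/- (One-step randomized sufficient descent.) Let X_i ⊆ ℝ^{m_i} be nonempty closed convex, X = ∏_{j=1}^n X_j, f : ℝ^N → ℝ continuously differentiable with ∇f Lipschitz with constant L_{∇f}, g_i : ℝ^{m_i} → ℝ convex, h = f + Σ_i g_i, and let f̃_i satisfy τ-strong convexity in the first argument and gradient consistency ∇_{x_i} f̃_i(x_i,x) = ∇_{x_i} f(x). Fix x ∈ X, a step-size γ with 0 < γ < τ/L_{∇f} and γ ≤ 1, and let x̂_i = argmin_{u∈X_i} f̃_i(u,x) + g_i(u) for all i. Let S be a random subset of {1,…,n} on a probability space with P(i ∈ S) ≥ p_min > 0 for every i, and define the random point X′ by X′_i = x_i + γ(x̂_i − x_i) if i ∈ S and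 X′_i = x_i otherwise. Then E[h(X′)] ≤ h(x) − (γ(τ − γ L_{∇f})/2) · p_min · ‖x̂ − x‖², where x̂ = (x̂_1,…,x̂_n). -/
open scoped RealInnerProductSpace
open Filter Topology Finset

noncomputable section

set_option maxHeartbeats 1000000

noncomputable section

lemma descent_lemma {E : Type*} [NormedAddCommGroup E] [InnerProductSpace ℝ E] [CompleteSpace E]
    (f : E → ℝ) (hf : Differentiable ℝ f) (L : ℝ)
    (hL : ∀ a b : E, ‖gradient f a - gradient f b‖ ≤ L * ‖a - b‖)
    (x y : E) : f y ≤ f x + ⟪gradient f x, y - x⟫ + L / 2 * ‖y - x‖ ^ 2 := by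
  set v := y - x with hv
  have hφ : ∀ t : ℝ, HasDerivAt (fun t : ℝ => f (x + t • v)) ⟪gradient f (x + t • v), v⟫ t := by
    intro t
    have h1 : HasDerivAt (fun t : ℝ => x + t • v) v t := by
      simpa using ((hasDerivAt_id t).smul_const v).const_add x
    have h2 := ((hf (x + t • v)).hasGradientAt.hasFDerivAt).comp_hasDerivAt t h1
    exact h2
  set ψ : ℝ → ℝ := fun t => f (x + t • v) - t * ⟪gradient f x, v⟫ - L / 2 * t ^ 2 * ‖v‖ ^ 2
    with hψdef
  have hψd : ∀ t : ℝ, HasDerivAt ψ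
      (⟪gradient f (x + t • v), v⟫ - ⟪gradient f x, v⟫ - L * t * ‖v‖ ^ 2) t := by
    intro t
    have h2 : HasDerivAt (fun t : ℝ => t * ⟪gradient f x, v⟫) ⟪gradient f x, v⟫ t := by
      simpa using (hasDerivAt_id t).mul_const (⟪gradient f x, v⟫)
    have h3 : HasDerivAt (fun t : ℝ => L / 2 * t ^ 2 * ‖v‖ ^ 2) (L * t * ‖v‖ ^ 2) t := by
      have := ((hasDerivAt_pow 2 t).const_mul (L / 2)).mul_const (‖v‖ ^ 2)
      refine this.congr_deriv ?_
      ring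
    exact ((hφ t).sub h2).sub h3
  have hanti : AntitoneOn ψ (Set.Icc (0:ℝ) 1) := by
    apply antitoneOn_of_deriv_nonpos (convex_Icc 0 1)
    · exact fun t _ => ((hψd t).continuousAt).continuousWithinAt
    · exact fun t _ => ((hψd t).differentiableAt).differentiableWithinAt
    · intro t ht
      rw [interior_Icc] at ht
      rw [(hψd t).deriv]
      have h1 : ⟪gradient f (x + t • v), v⟫ - ⟪gradient f x, v⟫
          = ⟪gradient f (x + t • v) - gradient f x, v⟫ := by
        rw [inner_sub_left]
      have h2 : ⟪gradient f (x + t • v) - gradient f x, v⟫ ≤ L * t * ‖v‖ ^ 2 := by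
        calc ⟪gradient f (x + t • v) - gradient f x, v⟫
            ≤ ‖gradient f (x + t • v) - gradient f x‖ * ‖v‖ := real_inner_le_norm _ _
          _ ≤ (L * ‖(x + t • v) - x‖) * ‖v‖ := by
              have := hL (x + t • v) x
              nlinarith [norm_nonneg v]
          _ = L * t * ‖v‖ ^ 2 := by
              rw [add_sub_cancel_left, norm_smul, Real.norm_eq_abs,
                abs_of_pos ht.1]
              ring
      linarith [h1 ▸ h2]
  have hkey := hanti (Set.left_mem_Icc.mpr zero_le_one) (Set.right_mem_Icc.mpr zero_le_one)
    zero_le_one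
  simp only [hψdef] at hkey
  have hx0 : x + (0:ℝ) • v = x := by simp
  have hx1 : x + (1:ℝ) • v = y := by simp [hv]
  rw [hx0, hx1] at hkey
  simp at hkey ⊢
  linarith


/-- **one-step randomized sufficient descent.** With `S` a random subset of
blocks with `P(i ∈ S) ≥ p_min > 0` (described by its distribution `p` on `Finset (Fin n)`)
and `X'` the corresponding random PSCA update,
`E[h(X')] ≤ h(x) − (γ(τ − γ L_{∇f})/2) p_min ‖x̂ − x‖²` where `h = f + Σ_i g_i`. -/
theorem stmt8
    {n : ℕ} {m : Fin n → ℕ}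
    (X : ∀ j, Set (EuclideanSpace ℝ (Fin (m j))))
    (hXne : ∀ j, (X j).Nonempty) (hXcl : ∀ j, IsClosed (X j)) (hXcv : ∀ j, Convex ℝ (X j))
    (f : TS n m → ℝ) (hf : ContDiff ℝ 1 f)
    (Lf : ℝ)
    -- `∇f` is Lipschitz continuous with constant `L_{∇f}`
    (hfL : ∀ a b : TS n m, ‖gradient f a - gradient f b‖ ≤ Lf * ‖a - b‖)
    (g : ∀ j, EuclideanSpace ℝ (Fin (m j)) → ℝ) (hg : ∀ j, ConvexOn ℝ Set.univ (g j))
    (ft : ∀ j, EuclideanSpace ℝ (Fin (m j)) → TS n m → ℝ)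
    (τ : ℝ) (hτ : 0 < τ)
    -- `f̃_i(·, y)` is continuously differentiable and `τ`-strongly convex on `X_i`
    (hC1 : ∀ i, ∀ y : TS n m, (∀ j, y j ∈ X j) → ContDiff ℝ 1 fun u => ft i u y)
    (hsc : ∀ i, ∀ y : TS n m, (∀ j, y j ∈ X j) → ∀ u ∈ X i, ∀ u' ∈ X i,
      ft i u y ≥ ft i u' y + ⟪gradient (fun v => ft i v y) u', u - u'⟫ + τ / 2 * ‖u - u'‖ ^ 2)
    -- gradient consistency: `∇_{x_i} f̃_i(x_i, x) = ∇_{x_i} f(x)` for all `x ∈ X`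
    (hgc : ∀ i, ∀ x : TS n m, (∀ j, x j ∈ X j) →
      gradient (fun u => ft i u x) (x i) = gradient f x i)
    -- the current point `x ∈ X`, step-size `0 < γ ≤ 1` with `γ L_{∇f} < τ`
    (x : TS n m) (hx : ∀ j, x j ∈ X j)
    (γ : ℝ) (hγ0 : 0 < γ) (hγ1 : γ ≤ 1) (hγτ : γ * Lf < τ)
    -- the best responses `x̂_i` for all blocks
    (xhat : TS n m)
    (hxhat : ∀ i, xhat i ∈ X i ∧ IsMinOn (fun u => ft i u x + g i u) (X i) (xhat i))
    -- the distribution `p` of the random subset `S`, with `P(i ∈ S) ≥ p_min > 0`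
    (p : Finset (Fin n) → ℝ) (hp0 : ∀ s, 0 ≤ p s) (hp1 : ∑ s : Finset (Fin n), p s = 1)
    (pmin : ℝ) (hpmin : 0 < pmin)
    (hmarg : ∀ i : Fin n, pmin ≤ ∑ s : Finset (Fin n), if i ∈ s then p s else 0)
    -- the random updated point `X'`
    (x' : Finset (Fin n) → TS n m)
    (hx' : ∀ s j, x' s j = if j ∈ s then x j + γ • (xhat j - x j) else x j) :
    ∑ s : Finset (Fin n), p s * (f (x' s) + ∑ i, g i (x' s i)) ≤
      f x + ∑ i, g i (x i) - γ * (τ - γ * Lf) / 2 * pmin * ‖xhat - x‖ ^ 2 := by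
  classical
  set K : ℝ := γ * (τ - γ * Lf) / 2 with hK
  have hKpos : 0 < K := by
    apply div_pos _ two_pos
    exact mul_pos hγ0 (by linarith)
  -- per-block bound
  have hB : ∀ i, ⟪gradient f x i, xhat i - x i⟫ + g i (xhat i) - g i (x i)
      ≤ -(τ / 2) * ‖xhat i - x i‖ ^ 2 := by
    intro i
    have h1 := hsc i x hx (xhat i) (hxhat i).1 (x i) (hx i)
    rw [hgc i x hx] at h1
    have h2 : ft i (xhat i) x + g i (xhat i) ≤ ft i (x i) x + g i (x i) :=
      isMinOn_iff.mp (hxhat i).2 (x i) (hx i)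
    linarith
  -- the displacement vector
  have claim : ∀ s : Finset (Fin n), f (x' s) + ∑ i, g i (x' s i) ≤
      f x + ∑ i, g i (x i) - K * ∑ i, (if i ∈ s then ‖xhat i - x i‖ ^ 2 else 0) := by
    intro s
    set e : TS n m := WithLp.toLp 2 (fun j => if j ∈ s then xhat j - x j else 0) with he
    have hxe : x' s = x + γ • e := by
      ext j : 1
      rw [hx' s j]
      by_cases hj : j ∈ s <;> simp [he, hj, PiLp.add_apply, PiLp.smul_apply]
    have hsub : x' s - x = γ • e := by rw [hxe]; abel
    set A : Fin n → ℝ := fun i => if i ∈ s then ⟪gradient f x i, xhat i - x i⟫ else 0 with hA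
    set B : Fin n → ℝ := fun i => if i ∈ s then g i (xhat i) - g i (x i) else 0 with hBdef
    set C : Fin n → ℝ := fun i => if i ∈ s then ‖xhat i - x i‖ ^ 2 else 0 with hCdef
    -- descent on f
    have hd := descent_lemma f (hf.differentiable one_ne_zero) Lf hfL x (x' s)
    rw [hsub] at hd
    have hinner : ⟪gradient f x, γ • e⟫ = γ * ∑ i, A i := by
      rw [real_inner_smul_right, PiLp.inner_apply]
      congr 1
      apply Finset.sum_congr rfl
      intro i _
      by_cases hi : i ∈ s <;> simp [he, hA, hi]
    have hnorm : ‖γ • e‖ ^ 2 = γ ^ 2 * ∑ i, C i := by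
      rw [norm_smul, mul_pow, Real.norm_eq_abs, sq_abs, PiLp.norm_sq_eq_of_L2]
      congr 1
      apply Finset.sum_congr rfl
      intro i _
      by_cases hi : i ∈ s <;> simp [he, hCdef, hi]
    -- g terms
    have hgsum : ∑ i, g i (x' s i) ≤ ∑ i, g i (x i) + γ * ∑ i, B i := by
      rw [Finset.mul_sum, ← Finset.sum_add_distrib]
      apply Finset.sum_le_sum
      intro i _
      rw [hx' s i]
      by_cases hi : i ∈ s
      · simp only [hi, if_true, hBdef]
        have hpt : x i + γ • (xhat i - x i) = (1 - γ) • x i + γ • xhat i := by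
          rw [smul_sub]; module
        rw [hpt]
        have h9 := (hg i).2 (Set.mem_univ (x i)) (Set.mem_univ (xhat i))
          (by linarith : (0:ℝ) ≤ 1 - γ) hγ0.le (by ring)
        simp only [smul_eq_mul] at h9
        nlinarith [h9]
      · simp [hi, hBdef]
    have hfsq : f (x' s) ≤ f x + γ * ∑ i, A i + Lf / 2 * (γ ^ 2 * ∑ i, C i) := by
      rw [← hinner, ← hnorm]; exact hd
    have hABC : ∀ i, γ * A i + γ * B i + Lf / 2 * (γ ^ 2 * C i) ≤ -K * C i := by
      intro i
      by_cases hi : i ∈ s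
      · simp only [hA, hBdef, hCdef, hi, if_true]
        have h8 := hB i
        nlinarith [sq_nonneg ‖xhat i - x i‖, hγ0.le, hτ.le]
      · simp [hA, hBdef, hCdef, hi, hK]
    have hcomb : γ * ∑ i, A i + γ * ∑ i, B i + Lf / 2 * (γ ^ 2 * ∑ i, C i)
        ≤ -K * ∑ i, C i := by
      calc γ * ∑ i, A i + γ * ∑ i, B i + Lf / 2 * (γ ^ 2 * ∑ i, C i)
          = ∑ i, (γ * A i + γ * B i + Lf / 2 * (γ ^ 2 * C i)) := by
            rw [Finset.sum_add_distrib, Finset.sum_add_distrib, ← Finset.mul_sum,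
              ← Finset.mul_sum, ← Finset.mul_sum, ← Finset.mul_sum]
        _ ≤ ∑ i, -K * C i := Finset.sum_le_sum fun i _ => hABC i
        _ = -K * ∑ i, C i := by rw [Finset.mul_sum]
    have hCs : ∑ i, (if i ∈ s then ‖xhat i - x i‖ ^ 2 else 0) = ∑ i, C i := rfl
    rw [hCs]
    linarith [hfsq, hgsum, hcomb]
  -- sum over s
  have hswap : ∑ s : Finset (Fin n), p s * ∑ i, (if i ∈ s then ‖xhat i - x i‖ ^ 2 else 0)
      = ∑ i, (∑ s : Finset (Fin n), if i ∈ s then p s else 0) * ‖xhat i - x i‖ ^ 2 := by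
    simp_rw [Finset.mul_sum, Finset.sum_mul]
    rw [Finset.sum_comm]
    apply Finset.sum_congr rfl
    intro i _
    apply Finset.sum_congr rfl
    intro s _
    by_cases hi : i ∈ s <;> simp [hi]
  have hnormtot : ‖xhat - x‖ ^ 2 = ∑ i, ‖xhat i - x i‖ ^ 2 := by
    rw [PiLp.norm_sq_eq_of_L2]
    apply Finset.sum_congr rfl
    intro i _
    simp [PiLp.sub_apply]
  have hmargsum : pmin * ‖xhat - x‖ ^ 2
      ≤ ∑ s : Finset (Fin n), p s * ∑ i, (if i ∈ s then ‖xhat i - x i‖ ^ 2 else 0) := by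
    rw [hswap, hnormtot, Finset.mul_sum]
    apply Finset.sum_le_sum
    intro i _
    exact mul_le_mul_of_nonneg_right (hmarg i) (sq_nonneg _)
  calc ∑ s : Finset (Fin n), p s * (f (x' s) + ∑ i, g i (x' s i))
      ≤ ∑ s : Finset (Fin n), p s * (f x + ∑ i, g i (x i)
        - K * ∑ i, (if i ∈ s then ‖xhat i - x i‖ ^ 2 else 0)) :=
        Finset.sum_le_sum fun s _ => mul_le_mul_of_nonneg_left (claim s) (hp0 s)
    _ = (f x + ∑ i, g i (x i))
        - K * ∑ s : Finset (Fin n), p s * ∑ i, (if i ∈ s then ‖xhat i - x i‖ ^ 2 else 0) := by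
        have hring : ∀ s : Finset (Fin n),
            p s * (f x + ∑ i, g i (x i) - K * ∑ i, (if i ∈ s then ‖xhat i - x i‖ ^ 2 else 0))
            = (f x + ∑ i, g i (x i)) * p s
              - K * (p s * ∑ i, (if i ∈ s then ‖xhat i - x i‖ ^ 2 else 0)) := fun s => by ring
        simp_rw [hring]
        rw [Finset.sum_sub_distrib, ← Finset.mul_sum, ← Finset.mul_sum, hp1, mul_one]
    _ ≤ (f x + ∑ i, g i (x i)) - K * (pmin * ‖xhat - x‖ ^ 2) := by
        have := mul_le_mul_of_nonneg_left hmargsum hKpos.le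
        linarith
    _ = f x + ∑ i, g i (x i) - γ * (τ - γ * Lf) / 2 * pmin * ‖xhat - x‖ ^ 2 := by
        rw [hK]; ring
end
end
end

section
/- Let X_i ⊆ ℝ^{m_i} be nonempty closed convex, X = ∏_{j=1}^n X_j, f : ℝ^N → ℝ continuously differentiable, g_i : ℝ^{m_i} → ℝ convex, and let f̃_i(·,x) be continuously differentiable, convex, and gradient consistent (∇_{x_i} f̃_i(x_i,x) = ∇_{x_i} f(x)), with ∇_{x_i} f̃_i(·,x) Lipschitz with constant L_i on X_i. Fix x ∈ X and define x̂_i = argmin_{u∈X_i} f̃_i(u,x) + g_i(u) and ỹ_i = argmin_{u∈X_i} {⟨∇_{x_i} f(x), u − x_i⟩ + g_i(u) + (1/2)‖u − x_i‖²} (assuming both minimizers exist). Then ‖x̂_i − ỹ_i‖ ≤ (1 + L_i)‖x_i − x̂_i‖. -/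
open scoped RealInnerProductSpace
open Filter Topology Finset

noncomputable section

private lemma first_order_aux {E : Type*} [NormedAddCommGroup E] [InnerProductSpace ℝ E]
    [CompleteSpace E]
    (φ g : E → ℝ) (S : Set E) (hS : Convex ℝ S)
    (hg : ConvexOn ℝ Set.univ g) (z : E) (hz : z ∈ S) (G : E)
    (hφ : HasGradientAt φ G z)
    (hmin : IsMinOn (fun u => φ u + g u) S z)
    (u : E) (hu : u ∈ S) : 0 ≤ ⟪G, u - z⟫ + g u - g z := by
  have h1 : HasDerivAt (fun t : ℝ => z + t • (u - z)) (u - z) 0 := by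
    simpa using ((hasDerivAt_id (0:ℝ)).smul_const (u - z)).const_add z
  have hψ : HasDerivAt (fun t : ℝ => φ (z + t • (u - z))) ⟪G, u - z⟫ 0 := by
    have hφ' : HasFDerivAt φ ((InnerProductSpace.toDual ℝ E) G) (z + (0:ℝ) • (u - z)) := by
      simpa using hφ.hasFDerivAt
    have h := hφ'.comp_hasDerivAt 0 h1
    simp at h
    exact h
  have hslope : Tendsto (slope (fun t : ℝ => φ (z + t • (u - z))) 0)
      (𝓝[>] (0:ℝ)) (𝓝 ⟪G, u - z⟫) :=
    (hasDerivAt_iff_tendsto_slope.mp hψ).mono_left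
      (nhdsWithin_mono 0 fun t ht => ne_of_gt ht)
  have hev : ∀ᶠ t in 𝓝[>] (0:ℝ),
      g z - g u ≤ slope (fun t : ℝ => φ (z + t • (u - z))) 0 t := by
    filter_upwards [Ioc_mem_nhdsGT_of_mem (by norm_num : (0:ℝ) ∈ Set.Ico 0 1)]
      with t ht
    obtain ⟨ht0, ht1⟩ := ht
    have hsum : z + t • (u - z) = (1 - t) • z + t • u := by module
    have hw : z + t • (u - z) ∈ S := by
      rw [hsum]; exact hS hz hu (by linarith) ht0.le (by ring)
    have hgw : g (z + t • (u - z)) ≤ (1 - t) * g z + t * g u := by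
      rw [hsum]
      simpa using hg.2 (Set.mem_univ z) (Set.mem_univ u)
        (by linarith : (0:ℝ) ≤ 1 - t) ht0.le (by ring)
    have hm : φ z + g z ≤ φ (z + t • (u - z)) + g (z + t • (u - z)) := hmin hw
    have key : t * (g z - g u) ≤ φ (z + t • (u - z)) - φ z := by nlinarith
    rw [slope_def_field]
    simp only [zero_smul, add_zero, sub_zero]
    rw [le_div_iff₀ ht0]
    linarith
  have := ge_of_tendsto hslope hev
  linarith

private lemma grad_quad_aux {E : Type*} [NormedAddCommGroup E] [InnerProductSpace ℝ E]
    [CompleteSpace E] (a c y : E) :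
    HasGradientAt (fun u => ⟪a, u - c⟫ + 1 / 2 * ‖u - c‖ ^ 2) (a + (y - c)) y := by
  rw [hasGradientAt_iff_hasFDerivAt]
  have h1 : HasFDerivAt (fun u : E => u - c) (ContinuousLinearMap.id ℝ E) y :=
    (hasFDerivAt_id y).sub_const c
  have hconst : HasFDerivAt (fun _ : E => a) (0 : E →L[ℝ] E) y := hasFDerivAt_const a y
  have h2 := hconst.inner ℝ h1
  have h3 := h1.inner ℝ h1
  have h4 : HasFDerivAt (fun u : E => ⟪a, u - c⟫ + 1 / 2 * ⟪u - c, u - c⟫)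
      (((fderivInnerCLM ℝ (a, y - c)).comp ((0 : E →L[ℝ] E).prod (ContinuousLinearMap.id ℝ E))) +
        (1 / 2 : ℝ) • ((fderivInnerCLM ℝ (y - c, y - c)).comp
          ((ContinuousLinearMap.id ℝ E).prod (ContinuousLinearMap.id ℝ E)))) y :=
    h2.add (h3.const_mul (1 / 2 : ℝ))
  have heq : (fun u : E => ⟪a, u - c⟫ + 1 / 2 * ‖u - c‖ ^ 2) =
      fun u : E => ⟪a, u - c⟫ + 1 / 2 * ⟪u - c, u - c⟫ := by
    funext u; rw [real_inner_self_eq_norm_sq]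
  rw [heq]
  refine HasFDerivAt.congr_fderiv h4 ?_
  ext v
  simp [inner_add_left, inner_sub_left, inner_sub_right, real_inner_comm]
  ring

/-- With `x̂_i` the best response and `ỹ_i` the proximal-gradient point
at `x ∈ X`, one has `‖x̂_i − ỹ_i‖ ≤ (1 + L_i) ‖x_i − x̂_i‖`. -/
theorem stmt13
    {n : ℕ} {m : Fin n → ℕ} (i : Fin n)
    (X : ∀ j, Set (EuclideanSpace ℝ (Fin (m j))))
    (hXne : ∀ j, (X j).Nonempty) (hXcl : ∀ j, IsClosed (X j)) (hXcv : ∀ j, Convex ℝ (X j))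
    (f : TS n m → ℝ) (hf : ContDiff ℝ 1 f)
    (g : EuclideanSpace ℝ (Fin (m i)) → ℝ) (hg : ConvexOn ℝ Set.univ g)
    (ft : EuclideanSpace ℝ (Fin (m i)) → TS n m → ℝ)
    -- `f̃_i(·, x)` is continuously differentiable and convex on `X_i`
    (hC1 : ∀ y : TS n m, (∀ j, y j ∈ X j) → ContDiff ℝ 1 fun u => ft u y)
    (hcvx : ∀ y : TS n m, (∀ j, y j ∈ X j) → ConvexOn ℝ (X i) fun u => ft u y)
    -- gradient consistency: `∇_{x_i} f̃_i(x_i, x) = ∇_{x_i} f(x)` for all `x ∈ X`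
    (hgc : ∀ y : TS n m, (∀ j, y j ∈ X j) →
      gradient (fun u => ft u y) (y i) = gradient f y i)
    -- `∇_{x_i} f̃_i(·, x)` is Lipschitz with constant `L_i` on `X_i`
    (Li : ℝ) (hftLip : ∀ y : TS n m, (∀ j, y j ∈ X j) → ∀ u ∈ X i, ∀ v ∈ X i,
      ‖gradient (fun w => ft w y) u - gradient (fun w => ft w y) v‖ ≤ Li * ‖u - v‖)
    -- the fixed point `x ∈ X`
    (x : TS n m) (hx : ∀ j, x j ∈ X j)
    -- `x̂_i = argmin_{u ∈ X_i} f̃_i(u, x) + g_i(u)`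
    (xhat : EuclideanSpace ℝ (Fin (m i))) (hxhatX : xhat ∈ X i)
    (hxhat : IsMinOn (fun u => ft u x + g u) (X i) xhat)
    -- `ỹ_i = argmin_{u ∈ X_i} ⟨∇_{x_i} f(x), u − x_i⟩ + g_i(u) + ½‖u − x_i‖²`
    (ytil : EuclideanSpace ℝ (Fin (m i))) (hytilX : ytil ∈ X i)
    (hytil : IsMinOn
      (fun u => ⟪gradient f x i, u - x i⟫ + g u + 1 / 2 * ‖u - x i‖ ^ 2) (X i) ytil) :
    ‖xhat - ytil‖ ≤ (1 + Li) * ‖x i - xhat‖ := by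
  set φ : EuclideanSpace ℝ (Fin (m i)) → ℝ := fun u => ft u x with hφdef
  set A : EuclideanSpace ℝ (Fin (m i)) := gradient f x i with hAdef
  set c : EuclideanSpace ℝ (Fin (m i)) := x i with hcdef
  set G1 : EuclideanSpace ℝ (Fin (m i)) := gradient φ xhat with hG1def
  -- first-order condition for the best response
  have hφgrad : HasGradientAt φ G1 xhat :=
    ((hC1 x hx).differentiable one_ne_zero xhat).hasGradientAt
  have h1 := first_order_aux φ g (X i) (hXcv i) hg xhat hxhatX G1 hφgrad hxhat ytil hytilX
  -- first-order condition for the proximal point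
  have hmin2 : IsMinOn (fun u => (⟪A, u - c⟫ + 1 / 2 * ‖u - c‖ ^ 2) + g u) (X i) ytil := by
    rw [isMinOn_iff] at hytil ⊢
    intro u hu
    have := hytil u hu
    simp only at this ⊢
    linarith
  have h2 := first_order_aux (fun u => ⟪A, u - c⟫ + 1 / 2 * ‖u - c‖ ^ 2) g (X i) (hXcv i) hg
    ytil hytilX (A + (ytil - c)) (grad_quad_aux A c ytil) hmin2 xhat hxhatX
  -- rearrange the inner products
  have hinner : ⟪G1, ytil - xhat⟫ + ⟪A + (ytil - c), xhat - ytil⟫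
      = ⟪G1 - A, ytil - xhat⟫ + ⟪c - xhat, ytil - xhat⟫ - ‖ytil - xhat‖ ^ 2 := by
    rw [← real_inner_self_eq_norm_sq]
    simp only [inner_sub_left, inner_add_left, inner_sub_right]
    ring
  have hsum : ‖ytil - xhat‖ ^ 2 ≤ ⟪G1 - A, ytil - xhat⟫ + ⟪c - xhat, ytil - xhat⟫ := by
    linarith
  -- Lipschitz bound on the gradient difference
  have hA : gradient φ c = A := hgc x hx
  have hLip : ‖G1 - A‖ ≤ Li * ‖xhat - c‖ := by
    rw [← hA]
    exact hftLip x hx xhat hxhatX c (hx i)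
  have hcs1 := real_inner_le_norm (G1 - A) (ytil - xhat)
  have hcs2 := real_inner_le_norm (c - xhat) (ytil - xhat)
  have hne : ‖xhat - c‖ = ‖c - xhat‖ := norm_sub_rev _ _
  have hd2 : ‖ytil - xhat‖ ^ 2 ≤ (Li * ‖c - xhat‖ + ‖c - xhat‖) * ‖ytil - xhat‖ := by
    rw [hne] at hLip
    nlinarith [mul_le_mul_of_nonneg_right hLip (norm_nonneg (ytil - xhat)),
      norm_nonneg (ytil - xhat)]
  have hfin : ‖ytil - xhat‖ ≤ (1 + Li) * ‖c - xhat‖ := by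
    have hLnn : 0 ≤ Li * ‖c - xhat‖ := by
      calc (0:ℝ) ≤ ‖G1 - A‖ := norm_nonneg _
        _ ≤ Li * ‖xhat - c‖ := hLip
        _ = Li * ‖c - xhat‖ := by rw [hne]
    rcases eq_or_lt_of_le (norm_nonneg (ytil - xhat)) with h0 | h0
    · rw [← h0]; nlinarith [norm_nonneg (c - xhat)]
    · nlinarith
  calc ‖xhat - ytil‖ = ‖ytil - xhat‖ := norm_sub_rev _ _
    _ ≤ (1 + Li) * ‖c - xhat‖ := hfin
    _ = (1 + Li) * ‖x i - xhat‖ := rfl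
end
end

section
/- Let X_i ⊆ ℝ^{m_i} be nonempty closed convex, X = ∏_{j=1}^n X_j, f : ℝ^N → ℝ continuously differentiable, g_i : ℝ^{m_i} → ℝ convex, h = f + Σ_i g_i, and let f̃_i(·,x) be continuously differentiable, τ-strongly convex, gradient consistent (∇_{x_i} f̃_i(x_i,x) = ∇_{x_i} f(x)), with ∇_{x_i} f̃_i(·,x) Lipschitz with constant L_i on X_i; set L = max_i L_i. For x ∈ X define x̂_i(x) = argmin_{u∈X_i} f̃_i(u,x) + g_i(u) and the proximal gradient ∇̃h(x) = x − argmin_{y∈X} {⟨∇f(x), y − x⟩ + Σ_i g_i(y_i) + (1/2)‖y − x‖²}. Then ‖∇̃h(x)‖² ≤ 2(L² + 2L + 2)‖x̂(x) − x‖², where x̂(x) = (x̂_1(x),…,x̂_n(x)). -/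
open scoped RealInnerProductSpace
open Filter Topology Finset

noncomputable section

section AuxLemmas

variable {E : Type*} [NormedAddCommGroup E] [InnerProductSpace ℝ E]

variable {E : Type*} [NormedAddCommGroup E] [InnerProductSpace ℝ E]

lemma aux_quad (a u v : E) (t : ℝ) :
    ‖((1-t) • u + t • v) - a‖^2
      = (1-t) * ‖u-a‖^2 + t * ‖v-a‖^2 - t*(1-t)*‖u-v‖^2 := by
  have h1 : ((1-t) • u + t • v) - a = (1-t) • (u-a) + t • (v-a) := by module
  have h2 : u - v = (u - a) - (v - a) := by abel
  have e1 : ‖(1-t) • (u-a) + t • (v-a)‖^2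
      = (1-t)^2 * ‖u-a‖^2 + 2*((1-t)*(t*⟪u-a, v-a⟫)) + t^2 * ‖v-a‖^2 := by
    rw [norm_add_sq_real, real_inner_smul_left, real_inner_smul_right, norm_smul, norm_smul,
      mul_pow, mul_pow, Real.norm_eq_abs, sq_abs, Real.norm_eq_abs, sq_abs]
  have e2 : ‖(u-a) - (v-a)‖^2 = ‖u-a‖^2 - 2*⟪u-a, v-a⟫ + ‖v-a‖^2 := norm_sub_sq_real _ _
  rw [h1, h2, e1, e2]; ring

lemma aux_strong_min {C : Set E} (hC : Convex ℝ C) {φ : E → ℝ} (hφ : ConvexOn ℝ C φ)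
    (a : E) {p : E} (hp : p ∈ C)
    (hmin : IsMinOn (fun u => φ u + 1/2*‖u - a‖^2) C p) :
    ∀ q ∈ C, φ p + 1/2*‖p-a‖^2 + 1/2*‖q-p‖^2 ≤ φ q + 1/2*‖q-a‖^2 := by
  intro q hq
  refine le_of_forall_pos_le_add (fun ε hε => ?_)
  set D : ℝ := 1/2*‖q-p‖^2 + 1 with hD
  have hD0 : 0 < D := by positivity
  set t : ℝ := min 1 (ε / D) with ht
  have ht0 : 0 < t := lt_min one_pos (div_pos hε hD0)
  have ht1 : t ≤ 1 := min_le_left _ _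
  have htD : t * D ≤ ε := by
    calc t * D ≤ (ε / D) * D := by
          exact mul_le_mul_of_nonneg_right (min_le_right _ _) hD0.le
      _ = ε := div_mul_cancel₀ _ hD0.ne'
  have hz : (1-t) • p + t • q ∈ C := hC hp hq (by linarith) ht0.le (by ring)
  have hmz := hmin hz
  simp only [Set.mem_setOf_eq] at hmz
  have hq1 : ‖((1-t) • p + t • q) - a‖^2
      = (1-t) * ‖p-a‖^2 + t * ‖q-a‖^2 - t*(1-t)*‖p-q‖^2 := aux_quad a p q t
  have hcv : φ ((1-t) • p + t • q) ≤ (1-t) * φ p + t * φ q :=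
    hφ.2 hp hq (by linarith) ht0.le (by ring)
  have hmz' : φ p + 1/2*‖p - a‖^2 ≤ φ ((1-t) • p + t • q) + 1/2*‖((1-t) • p + t • q) - a‖^2 := hmz
  have hpq : ‖p - q‖ = ‖q - p‖ := norm_sub_rev _ _
  rw [hq1, hpq] at hmz'
  have key : φ p + 1/2*‖p-a‖^2 + (1-t)/2*‖q-p‖^2 ≤ φ q + 1/2*‖q-a‖^2 := by
    have := hmz'
    nlinarith [this, hcv, ht0]
  rw [hD] at htD
  have h5 : t/2 * ‖q-p‖^2 ≤ ε := by nlinarith [htD, ht0.le]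
  linarith [key, h5]

lemma aux_firm (A B p q : E) (s r : ℝ)
    (h1 : s + 1/2*‖p-A‖^2 + 1/2*‖q-p‖^2 ≤ r + 1/2*‖q-A‖^2)
    (h2 : r + 1/2*‖q-B‖^2 + 1/2*‖p-q‖^2 ≤ s + 1/2*‖p-B‖^2) :
    ‖q - p‖ ≤ ‖B - A‖ := by
  have e1 : ‖q-A‖^2 = ‖q-p‖^2 + 2*⟪q-p, p-A⟫ + ‖p-A‖^2 := by
    rw [show q - A = (q-p)+(p-A) by abel, norm_add_sq_real]
  have e2 : ‖p-B‖^2 = ‖p-q‖^2 + 2*⟪p-q, q-B⟫ + ‖q-B‖^2 := by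
    rw [show p - B = (p-q)+(q-B) by abel, norm_add_sq_real]
  have e3 : ⟪p-q, q-B⟫ = -⟪q-p, q-B⟫ := by
    rw [show p - q = -(q-p) by abel, inner_neg_left]
  have e4 : ⟪q-p, p-A⟫ - ⟪q-p, q-B⟫ = ⟪q-p, B-A⟫ - ‖q-p‖^2 := by
    rw [← inner_sub_right, show (p-A)-(q-B) = (B-A) - (q-p) by abel, inner_sub_right,
      real_inner_self_eq_norm_sq]
  have e5 : ‖p-q‖ = ‖q-p‖ := norm_sub_rev _ _
  have hkey : ‖q-p‖^2 ≤ ⟪q-p, B-A⟫ := by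
    rw [e1] at h1; rw [e2, e3, e5] at h2
    linarith [e4]
  have hcs : ⟪q-p, B-A⟫ ≤ ‖q-p‖ * ‖B-A‖ := real_inner_le_norm _ _
  rcases eq_or_lt_of_le (norm_nonneg (q-p)) with h0 | h0
  · rw [← h0]; exact norm_nonneg _
  · have := hkey.trans hcs
    rw [pow_two] at this
    exact le_of_mul_le_mul_left this h0

lemma aux_vi [CompleteSpace E] {C : Set E} (hC : Convex ℝ C) {F : E → ℝ} (hF : ContDiff ℝ 1 F)
    {g : E → ℝ} (hg : ConvexOn ℝ Set.univ g) {p : E} (hp : p ∈ C)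
    (hmin : IsMinOn (fun u => F u + g u) C p) :
    ∀ u ∈ C, g p ≤ ⟪gradient F p, u - p⟫ + g u := by
  intro u hu
  set v : E := u - p with hv
  have hd : HasGradientAt F (gradient F p) p :=
    (hF.differentiable one_ne_zero p).hasGradientAt
  have hline : HasDerivAt (fun t : ℝ => p + t • v) v 0 := by
    simpa using ((hasDerivAt_id (0:ℝ)).smul_const v).const_add p
  have hcomp : HasDerivAt (fun t : ℝ => F (p + t • v)) ⟪gradient F p, v⟫ 0 := by
    have hd' : HasFDerivAt F ((InnerProductSpace.toDual ℝ E) (gradient F p)) (p + (0:ℝ) • v) := by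
      simpa using hd.hasFDerivAt
    have := hd'.comp_hasDerivAt 0 hline
    simpa [InnerProductSpace.toDual_apply_apply, Function.comp_def] using this
  have hslope : Tendsto (slope (fun t : ℝ => F (p + t • v)) 0) (𝓝[>] 0)
      (𝓝 ⟪gradient F p, v⟫) := by
    have := hasDerivAt_iff_tendsto_slope.mp hcomp
    exact this.mono_left (nhdsWithin_mono _ (by intro t ht; exact ne_of_gt ht))
  have hev : ∀ᶠ t in 𝓝[>] (0:ℝ), g p - g u ≤ slope (fun t : ℝ => F (p + t • v)) 0 t := by
    filter_upwards [Ioc_mem_nhdsGT_of_mem (Set.mem_Ico.mpr ⟨le_refl (0:ℝ), one_pos⟩)]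
      with t ht
    obtain ⟨ht0, ht1⟩ := ht
    have hzmem : p + t • v ∈ C := by
      have : p + t • v = (1-t) • p + t • u := by rw [hv]; module
      rw [this]
      exact hC hp hu (by linarith) ht0.le (by ring)
    have hmz : F p + g p ≤ F (p + t • v) + g (p + t • v) := hmin hzmem
    have hgz : g (p + t • v) ≤ (1-t) * g p + t * g u := by
      have hrw : p + t • v = (1-t) • p + t • u := by rw [hv]; module
      rw [hrw]
      exact hg.2 (Set.mem_univ p) (Set.mem_univ u) (by linarith) ht0.le (by ring)
    have hF' : t * (g p - g u) ≤ F (p + t • v) - F (p + (0:ℝ) • v) := by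
      simp only [zero_smul, add_zero]
      nlinarith [hmz, hgz]
    rw [slope_def_field, sub_zero, le_div_iff₀ ht0]
    nlinarith [hF']
  have := ge_of_tendsto hslope hev
  linarith [this]

end AuxLemmas

set_option maxHeartbeats 1000000 in
/-- The proximal gradient `∇̃h(x) = x − argmin_{y ∈ X} {⟨∇f(x), y − x⟩ +
Σ_i g_i(y_i) + ½‖y − x‖²}` satisfies `‖∇̃h(x)‖² ≤ 2(L² + 2L + 2) ‖x̂(x) − x‖²`. -/
theorem stmt14
    {n : ℕ} {m : Fin n → ℕ}
    (X : ∀ j, Set (EuclideanSpace ℝ (Fin (m j))))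
    (hXne : ∀ j, (X j).Nonempty) (hXcl : ∀ j, IsClosed (X j)) (hXcv : ∀ j, Convex ℝ (X j))
    (f : TS n m → ℝ) (hf : ContDiff ℝ 1 f)
    (g : ∀ j, EuclideanSpace ℝ (Fin (m j)) → ℝ) (hg : ∀ j, ConvexOn ℝ Set.univ (g j))
    (ft : ∀ j, EuclideanSpace ℝ (Fin (m j)) → TS n m → ℝ)
    (τ : ℝ) (hτ : 0 < τ)
    -- `f̃_i(·, y)` is continuously differentiable and `τ`-strongly convex on `X_i`
    (hC1 : ∀ i, ∀ y : TS n m, (∀ j, y j ∈ X j) → ContDiff ℝ 1 fun u => ft i u y)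
    (hsc : ∀ i, ∀ y : TS n m, (∀ j, y j ∈ X j) → ∀ u ∈ X i, ∀ u' ∈ X i,
      ft i u y ≥ ft i u' y + ⟪gradient (fun v => ft i v y) u', u - u'⟫ + τ / 2 * ‖u - u'‖ ^ 2)
    -- gradient consistency: `∇_{x_i} f̃_i(x_i, x) = ∇_{x_i} f(x)` for all `x ∈ X`
    (hgc : ∀ i, ∀ y : TS n m, (∀ j, y j ∈ X j) →
      gradient (fun u => ft i u y) (y i) = gradient f y i)
    -- `∇_{x_i} f̃_i(·, x)` is Lipschitz with constant `L = max_i L_i`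
    (L : ℝ) (hftLip : ∀ i, ∀ y : TS n m, (∀ j, y j ∈ X j) →
      ∀ u v : EuclideanSpace ℝ (Fin (m i)),
      ‖gradient (fun w => ft i w y) u - gradient (fun w => ft i w y) v‖ ≤ L * ‖u - v‖)
    -- the fixed point `x ∈ X`
    (x : TS n m) (hx : ∀ j, x j ∈ X j)
    -- the best responses `x̂_i(x)`
    (xhat : TS n m)
    (hxhat : ∀ i, xhat i ∈ X i ∧ IsMinOn (fun u => ft i u x + g i u) (X i) (xhat i))
    -- the proximal point defining `∇̃h(x) = x − y^*`
    (ystar : TS n m) (hystarX : ∀ j, ystar j ∈ X j)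
    (hystar : IsMinOn
      (fun y => ⟪gradient f x, y - x⟫ + (∑ i, g i (y i)) + 1 / 2 * ‖y - x‖ ^ 2)
      {z : TS n m | ∀ j, z j ∈ X j} ystar) :
    ‖x - ystar‖ ^ 2 ≤ 2 * (L ^ 2 + 2 * L + 2) * ‖xhat - x‖ ^ 2 := by
  classical
  set C : Set (TS n m) := {z : TS n m | ∀ j, z j ∈ X j} with hCdef
  have hsum : ∀ w : TS n m, ‖w‖^2 = ∑ i, ‖w i‖^2 := fun w => PiLp.norm_sq_eq_of_L2 _ w
  by_cases hL : 0 ≤ L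
  · -- main case
    have hCcv : Convex ℝ C := by
      intro y hy z hz a b ha hb hab i
      have : (a • y + b • z) i = a • y i + b • z i := by
        simp [PiLp.add_apply, PiLp.smul_apply]
      rw [this]
      exact hXcv i (hy i) (hz i) ha hb hab
    set G : TS n m → ℝ := fun y => ∑ i, g i (y i) with hGdef
    have hGcv : ConvexOn ℝ C G := by
      refine ⟨hCcv, fun y hy z hz a b ha hb hab => ?_⟩
      calc ∑ i, g i ((a • y + b • z) i) = ∑ i, g i (a • y i + b • z i) := by
            simp [PiLp.add_apply, PiLp.smul_apply]
        _ ≤ ∑ i, (a * g i (y i) + b * g i (z i)) := by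
            refine Finset.sum_le_sum fun i _ => ?_
            exact (hg i).2 (Set.mem_univ _) (Set.mem_univ _) ha hb hab
        _ = a * ∑ i, g i (y i) + b * ∑ i, g i (z i) := by
            rw [Finset.sum_add_distrib, Finset.mul_sum, Finset.mul_sum]
    set γ : TS n m := WithLp.toLp 2 (fun i => gradient (fun u => ft i u x) (xhat i)) with hγdef
    have hγi : ∀ i, γ i = gradient (fun u => ft i u x) (xhat i) := fun i => rfl
    set A : TS n m := xhat - γ with hAdef
    set B : TS n m := x - gradient f x with hBdef
    have hxC : x ∈ C := hx
    have hxhatC : xhat ∈ C := fun i => (hxhat i).1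
    have hystarC : ystar ∈ C := hystarX
    -- variational inequalities for the best responses
    have hVI : ∀ i, ∀ u ∈ X i,
        g i (xhat i) ≤ ⟪gradient (fun u => ft i u x) (xhat i), u - xhat i⟫ + g i u :=
      fun i => aux_vi (hXcv i) (hC1 i x hx) (hg i) (hxhat i).1 (hxhat i).2
    -- xhat minimizes G + ½‖· - A‖² on C
    have hminA : IsMinOn (fun y => G y + 1/2*‖y - A‖^2) C xhat := by
      intro y hy
      simp only [Set.mem_setOf_eq]
      have key : ∀ i, g i (xhat i) + 1/2*‖(xhat - A) i‖^2 ≤ g i (y i) + 1/2*‖(y - A) i‖^2 := by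
        intro i
        have hAi : A i = xhat i - γ i := PiLp.sub_apply _ xhat γ i
        have e1 : (xhat - A) i = γ i := by rw [PiLp.sub_apply, hAi]; abel
        have e2 : (y - A) i = (y i - xhat i) + γ i := by rw [PiLp.sub_apply, hAi]; abel
        have e3 : ‖(y i - xhat i) + γ i‖^2
            = ‖y i - xhat i‖^2 + 2*⟪y i - xhat i, γ i⟫ + ‖γ i‖^2 := norm_add_sq_real _ _
        have hvi : g i (xhat i) ≤ ⟪γ i, y i - xhat i⟫ + g i (y i) := hVI i (y i) (hy i)
        rw [e1, e2, e3]
        have hsymm : ⟪y i - xhat i, γ i⟫ = ⟪γ i, y i - xhat i⟫ := real_inner_comm _ _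
        nlinarith [hvi, sq_nonneg ‖y i - xhat i‖, hsymm]
      calc G xhat + 1/2*‖xhat - A‖^2 = ∑ i, (g i (xhat i) + 1/2*‖(xhat - A) i‖^2) := by
            rw [hGdef, hsum (xhat - A), Finset.mul_sum, Finset.sum_add_distrib]
        _ ≤ ∑ i, (g i (y i) + 1/2*‖(y - A) i‖^2) := Finset.sum_le_sum fun i _ => key i
        _ = G y + 1/2*‖y - A‖^2 := by
            rw [hGdef, hsum (y - A), Finset.mul_sum, Finset.sum_add_distrib]
    -- ystar minimizes G + ½‖· - B‖² on C
    have hPB : ∀ y : TS n m, G y + 1/2*‖y - B‖^2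
        = (⟪gradient f x, y - x⟫ + G y + 1/2*‖y - x‖^2) + 1/2*‖gradient f x‖^2 := by
      intro y
      have h1 : y - B = (y - x) + gradient f x := by rw [hBdef]; abel
      rw [h1, norm_add_sq_real, real_inner_comm]
      ring
    have hminB : IsMinOn (fun y => G y + 1/2*‖y - B‖^2) C ystar := by
      intro y hy
      simp only [Set.mem_setOf_eq]
      rw [hPB y, hPB ystar]
      have := hystar hy
      simp only [Set.mem_setOf_eq] at this
      have h2 : ⟪gradient f x, ystar - x⟫ + G ystar + 1 / 2 * ‖ystar - x‖ ^ 2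
          ≤ ⟪gradient f x, y - x⟫ + G y + 1 / 2 * ‖y - x‖ ^ 2 := this
      linarith
    -- strong minimality and firm nonexpansiveness
    have hstrA := aux_strong_min hCcv hGcv A hxhatC hminA ystar hystarC
    have hstrB := aux_strong_min hCcv hGcv B hystarC hminB xhat hxhatC
    have hfirm : ‖ystar - xhat‖ ≤ ‖B - A‖ :=
      aux_firm A B xhat ystar (G xhat) (G ystar) hstrA hstrB
    -- Lipschitz bound on ‖γ - ∇f x‖
    have hnorm1 : ‖γ - gradient f x‖^2 ≤ L^2 * ‖xhat - x‖^2 := by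
      rw [hsum (γ - gradient f x), hsum (xhat - x), Finset.mul_sum]
      refine Finset.sum_le_sum fun i _ => ?_
      have hgi : gradient f x i = gradient (fun u => ft i u x) (x i) := (hgc i x hx).symm
      have hlip := hftLip i x hx (xhat i) (x i)
      have e1 : (γ - gradient f x) i = gradient (fun u => ft i u x) (xhat i)
          - gradient (fun u => ft i u x) (x i) := by
        rw [PiLp.sub_apply, hγi i, hgi]
      have e2 : (xhat - x) i = xhat i - x i := PiLp.sub_apply _ _ _ _
      rw [e1, e2]
      nlinarith [hlip, norm_nonneg (gradient (fun u => ft i u x) (xhat i)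
        - gradient (fun u => ft i u x) (x i)), norm_nonneg (xhat i - x i),
        mul_nonneg hL (norm_nonneg (xhat i - x i))]
    have hnorm1' : ‖γ - gradient f x‖ ≤ L * ‖xhat - x‖ := by
      nlinarith [hnorm1, norm_nonneg (γ - gradient f x), norm_nonneg (xhat - x),
        mul_nonneg hL (norm_nonneg (xhat - x))]
    have hBA : B - A = (x - xhat) + (γ - gradient f x) := by rw [hAdef, hBdef]; abel
    have hBAnorm : ‖B - A‖ ≤ ‖xhat - x‖ + L * ‖xhat - x‖ := by
      rw [hBA]
      refine le_trans (norm_add_le _ _) ?_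
      rw [norm_sub_rev x xhat]
      linarith [hnorm1']
    -- triangle inequality and conclusion
    have htri : ‖x - ystar‖ ≤ ‖xhat - x‖ + ‖ystar - xhat‖ := by
      calc ‖x - ystar‖ = ‖(x - xhat) + (xhat - ystar)‖ := by rw [sub_add_sub_cancel]
        _ ≤ ‖x - xhat‖ + ‖xhat - ystar‖ := norm_add_le _ _
        _ = ‖xhat - x‖ + ‖ystar - xhat‖ := by rw [norm_sub_rev x xhat, norm_sub_rev xhat ystar]
    have hfin : ‖x - ystar‖ ≤ (2 + L) * ‖xhat - x‖ := by
      have := htri.trans (by linarith [hfirm, hBAnorm] :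
        ‖xhat - x‖ + ‖ystar - xhat‖ ≤ ‖xhat - x‖ + (‖xhat - x‖ + L * ‖xhat - x‖))
      linarith [this]
    nlinarith [hfin, norm_nonneg (x - ystar), norm_nonneg (xhat - x), hL,
      mul_nonneg hL (norm_nonneg (xhat - x)), sq_nonneg (L * ‖xhat - x‖)]
  · -- degenerate case : L < 0 forces all blocks to be trivial
    push_neg at hL
    have hm : ∀ i, m i = 0 := by
      intro i
      by_contra hmi
      have hpos : 0 < m i := Nat.pos_of_ne_zero hmi
      set u : EuclideanSpace ℝ (Fin (m i)) := EuclideanSpace.single ⟨0, hpos⟩ (1:ℝ) with hu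
      have hlip := hftLip i x hx u 0
      rw [sub_zero, hu, EuclideanSpace.norm_single] at hlip
      simp only [norm_one, mul_one] at hlip
      have := norm_nonneg (gradient (fun w => ft i w x) u - gradient (fun w => ft i w x) 0)
      linarith
    have hzero : ∀ i (v : EuclideanSpace ℝ (Fin (m i))), v = 0 := by
      intro i v
      ext j
      exact absurd j.2 (by have := hm i; omega)
    have h1 : ‖x - ystar‖^2 = 0 := by
      rw [hsum]
      refine Finset.sum_eq_zero fun i _ => ?_
      rw [hzero i ((x - ystar) i), norm_zero]
      ring
    have h2 : ‖xhat - x‖^2 = 0 := by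
      rw [hsum]
      refine Finset.sum_eq_zero fun i _ => ?_
      rw [hzero i ((xhat - x) i), norm_zero]
      ring
    rw [h1, h2]
    ring_nf
    exact le_refl 0
end
end

section
/- (Non-asymptotic rate for the proximal gradient under sufficient descent, deterministic form of Theorem 3.) Let X_i ⊆ ℝ^{m_i} be nonempty closed convex, X = ∏_{j=1}^n X_j, f : ℝ^N → ℝ continuously differentiable, g_i convex, h = f + Σ_i g_i with h^* = inf_{x∈X} h(x) > −∞, and let f̃_i(·,x) be continuously differentiable, τ-strongly convex, gradient consistent (∇_{x_i} f̃_i(x_i,x) = ∇_{x_i} f(x)), with ∇_{x_i} f̃_i(·,x) Lipschitz with constant L_i; set L = max_i L_i. Let (x^r)_{r≥0} ⊆ X be any sequence, let x̂^r = x̂(x^r) with x̂_i(x) = argmin_{u∈X_i} f̃_i(u,x) + g_i(u), and suppose there is β̂ > 0 such that h(x^{r+1}) ≤ h(x^r) − β̂‖x̂^r − x^r‖² for every r. Then for every T ≥ 0, Σ_{r=0}^T ‖∇̃h(x^r)‖² ≤ κ, where κ = 2(L² + 2L + 2)(h(x^0) − h^*)/β̂; in particular min_{0 ≤ r ≤ T}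 ‖∇̃h(x^r)‖² ≤ κ/(T+1), so the first index T_ε with ‖∇̃h(x^{T_ε})‖² ≤ ε satisfies T_ε ≤ κ/ε. -/
open scoped RealInnerProductSpace
open Filter Topology Finset

noncomputable section

private lemma lim_aux' {A B C : ℝ} (h : ∀ t ∈ Set.Ioc (0:ℝ) 1, B ≤ A + t * C) : B ≤ A := by
  have ht : Filter.Tendsto (fun t : ℝ => A + t * C) (𝓝[>] 0) (𝓝 (A + 0 * C)) :=
    ((continuous_const.add (continuous_id.mul continuous_const)).tendsto 0).mono_left
      nhdsWithin_le_nhds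
  have hev : ∀ᶠ t in 𝓝[>] (0:ℝ), B ≤ A + t * C :=
    Filter.eventually_of_mem (Ioc_mem_nhdsGT_of_mem ⟨le_refl 0, one_pos⟩) h
  simpa using ge_of_tendsto ht hev

private lemma vi_aux' {E : Type*} [NormedAddCommGroup E] [InnerProductSpace ℝ E]
    {S : Set E} (hS : Convex ℝ S) {F g : E → ℝ} {Gr : E → E} {τ L : ℝ} (hτ : 0 < τ)
    (hg : ConvexOn ℝ Set.univ g)
    (hsc : ∀ u ∈ S, ∀ u' ∈ S, F u ≥ F u' + ⟪Gr u', u - u'⟫ + τ / 2 * ‖u - u'‖ ^ 2)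
    (hLip : ∀ u v : E, ‖Gr u - Gr v‖ ≤ L * ‖u - v‖)
    {p : E} (hp : p ∈ S) (hmin : IsMinOn (fun u => F u + g u) S p)
    {u : E} (hu : u ∈ S) : g p - g u ≤ ⟪Gr p, u - p⟫ := by
  set d : E := u - p with hd
  set d2 : ℝ := ‖d‖ ^ 2 with hd2
  apply lim_aux' (C := |L| * d2)
  intro t ht
  obtain ⟨ht0, ht1⟩ := ht
  set q : E := p + t • d with hq
  have hqS : q ∈ S := by
    have := hS hp hu (by linarith : (0:ℝ) ≤ 1 - t) ht0.le (by ring)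
    have heq : (1 - t) • p + t • u = q := by rw [hq, hd]; module
    rwa [heq] at this
  have hqp : q - p = t • d := by rw [hq]; abel
  have hpq : p - q = -(t • d) := by rw [hq]; abel
  have h1 : F p + g p ≤ F q + g q := hmin hqS
  have h2 : F p ≥ F q + ⟪Gr q, p - q⟫ + τ / 2 * ‖p - q‖ ^ 2 := hsc p hp q hqS
  have hinner : ⟪Gr q, p - q⟫ = -(t * ⟪Gr q, d⟫) := by
    rw [hpq, inner_neg_right, real_inner_smul_right]
  have hnpq : ‖p - q‖ ^ 2 = t ^ 2 * d2 := by
    rw [hpq, norm_neg, norm_smul, Real.norm_eq_abs, abs_of_pos ht0, hd2]; ring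
  have h3 : g q ≤ (1 - t) * g p + t * g u := by
    have := hg.2 (Set.mem_univ p) (Set.mem_univ u) (by linarith : (0:ℝ) ≤ 1 - t) ht0.le
      (by ring : (1 - t) + t = 1)
    have heq : (1 - t) • p + t • u = q := by rw [hq, hd]; module
    rw [heq] at this
    simpa [smul_eq_mul] using this
  have h4 : ⟪Gr q, d⟫ ≤ ⟪Gr p, d⟫ + |L| * t * d2 := by
    have hcs : ⟪Gr q - Gr p, d⟫ ≤ ‖Gr q - Gr p‖ * ‖d‖ := real_inner_le_norm _ _
    have hL1 : ‖Gr q - Gr p‖ ≤ |L| * (t * ‖d‖) := by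
      calc ‖Gr q - Gr p‖ ≤ L * ‖q - p‖ := hLip q p
        _ ≤ |L| * ‖q - p‖ := mul_le_mul_of_nonneg_right (le_abs_self L) (norm_nonneg _)
        _ = |L| * (t * ‖d‖) := by
            rw [hqp, norm_smul, Real.norm_eq_abs, abs_of_pos ht0]
    have hexp : ⟪Gr q, d⟫ = ⟪Gr p, d⟫ + ⟪Gr q - Gr p, d⟫ := by
      rw [inner_sub_left]; ring
    have h5 : ⟪Gr q - Gr p, d⟫ ≤ |L| * (t * ‖d‖) * ‖d‖ :=
      hcs.trans (mul_le_mul_of_nonneg_right hL1 (norm_nonneg _))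
    rw [hexp, hd2]; nlinarith [norm_nonneg d]
  have e1 : F q ≤ F p + t * ⟪Gr q, d⟫ - τ / 2 * (t ^ 2 * d2) := by
    rw [hinner, hnpq] at h2; linarith
  have e2 : t * (g p - g u) ≤ t * ⟪Gr q, d⟫ - τ / 2 * (t ^ 2 * d2) := by linarith
  have e3 : t * ⟪Gr q, d⟫ ≤ t * (⟪Gr p, d⟫ + |L| * t * d2) :=
    mul_le_mul_of_nonneg_left h4 ht0.le
  have e4 : (0:ℝ) ≤ τ / 2 * (t ^ 2 * d2) := by
    have : (0:ℝ) ≤ d2 := by rw [hd2]; positivity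
    positivity
  have hmain : t * (g p - g u) ≤ t * (⟪Gr p, d⟫ + t * (|L| * d2)) := by nlinarith
  exact le_of_mul_le_mul_left (by simpa using hmain) ht0

private lemma vi_quad' {E : Type*} [NormedAddCommGroup E] [InnerProductSpace ℝ E]
    {S : Set E} (hS : Convex ℝ S) {G : E → ℝ} {c w : E}
    (hGcv : ∀ a b : E, ∀ t : ℝ, 0 ≤ t → t ≤ 1 →
      G ((1 - t) • a + t • b) ≤ (1 - t) * G a + t * G b)
    {p : E} (hp : p ∈ S)
    (hmin : IsMinOn (fun z => ⟪c, z - w⟫ + G z + 1 / 2 * ‖z - w‖ ^ 2) S p)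
    {q : E} (hq : q ∈ S) :
    G p - G q ≤ ⟪c + (p - w), q - p⟫ := by
  set D : E := q - p with hD
  apply lim_aux' (C := 1 / 2 * ‖D‖ ^ 2)
  intro t ht
  obtain ⟨ht0, ht1⟩ := ht
  set pt : E := p + t • D with hpt
  have heq : (1 - t) • p + t • q = pt := by rw [hpt, hD]; module
  have hptS : pt ∈ S := by
    have := hS hp hq (by linarith : (0:ℝ) ≤ 1 - t) ht0.le (by ring)
    rwa [heq] at this
  have h1 : ⟪c, p - w⟫ + G p + 1 / 2 * ‖p - w‖ ^ 2 ≤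
      ⟪c, pt - w⟫ + G pt + 1 / 2 * ‖pt - w‖ ^ 2 := hmin hptS
  have h2 : G pt ≤ (1 - t) * G p + t * G q := by
    rw [← heq]; exact hGcv p q t ht0.le ht1
  have h3 : pt - w = (p - w) + t • D := by rw [hpt]; abel
  have h4 : ⟪c, pt - w⟫ = ⟪c, p - w⟫ + t * ⟪c, D⟫ := by
    rw [h3, inner_add_right, real_inner_smul_right]
  have h5 : ‖pt - w‖ ^ 2 = ‖p - w‖ ^ 2 + 2 * (t * ⟪p - w, D⟫) + t ^ 2 * ‖D‖ ^ 2 := by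
    rw [h3, norm_add_sq_real, real_inner_smul_right, norm_smul, Real.norm_eq_abs,
      abs_of_pos ht0, mul_pow]
  have h6 : ⟪c + (p - w), D⟫ = ⟪c, D⟫ + ⟪p - w, D⟫ := inner_add_left _ _ _
  have hmain : t * (G p - G q) ≤ t * (⟪c + (p - w), D⟫ + t * (1 / 2 * ‖D‖ ^ 2)) := by
    rw [h6]; nlinarith [h1, h2, h4, h5]
  exact le_of_mul_le_mul_left (by simpa using hmain) ht0

private lemma alg_aux' {a b L I1 I2 : ℝ} (hann : 0 ≤ a) (hbnn : 0 ≤ b) (hL : 0 ≤ L)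
    (comb : 0 ≤ I1 + I2) (i1 : I1 ≤ L * b * (b + a)) (i2 : I2 ≤ a * b - a ^ 2) :
    a ^ 2 ≤ (L ^ 2 + 4 * L + 1) * b ^ 2 := by
  nlinarith [sq_nonneg (a - (L + 1) * b), mul_nonneg hL hbnn,
    mul_nonneg (mul_nonneg hL hbnn) hbnn]

set_option maxHeartbeats 1000000 in
/-- **deterministic form of Theorem 3.** Under the sufficient-descent
condition `h(x^{r+1}) ≤ h(x^r) − β̂‖x̂^r − x^r‖²`, the proximal gradients
`∇̃h(x^r) = x^r − y^r` satisfy `Σ_{r=0}^T ‖∇̃h(x^r)‖² ≤ κ` with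
`κ = 2(L² + 2L + 2)(h(x⁰) − h^*)/β̂`; in particular
`min_{0 ≤ r ≤ T} ‖∇̃h(x^r)‖² ≤ κ/(T+1)`, and the first index `T_ε` with
`‖∇̃h(x^{T_ε})‖² ≤ ε` satisfies `T_ε ≤ κ/ε`. -/
theorem stmt16
    {n : ℕ} {m : Fin n → ℕ}
    (X : ∀ j, Set (EuclideanSpace ℝ (Fin (m j))))
    (hXne : ∀ j, (X j).Nonempty) (hXcl : ∀ j, IsClosed (X j)) (hXcv : ∀ j, Convex ℝ (X j))
    (f : TS n m → ℝ) (hf : ContDiff ℝ 1 f)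
    (g : ∀ j, EuclideanSpace ℝ (Fin (m j)) → ℝ) (hg : ∀ j, ConvexOn ℝ Set.univ (g j))
    -- `h^* = inf_{x ∈ X} h(x) > −∞`, where `h = f + Σ_i g_i`
    (hstar : ℝ)
    (hinf : IsGLB ((fun z => f z + ∑ i, g i (z i)) '' {z : TS n m | ∀ j, z j ∈ X j}) hstar)
    (ft : ∀ j, EuclideanSpace ℝ (Fin (m j)) → TS n m → ℝ)
    (τ : ℝ) (hτ : 0 < τ)
    -- `f̃_i(·, y)` is continuously differentiable and `τ`-strongly convex on `X_i`
    (hC1 : ∀ i, ∀ y : TS n m, (∀ j, y j ∈ X j) → ContDiff ℝ 1 fun u => ft i u y)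
    (hsc : ∀ i, ∀ y : TS n m, (∀ j, y j ∈ X j) → ∀ u ∈ X i, ∀ u' ∈ X i,
      ft i u y ≥ ft i u' y + ⟪gradient (fun v => ft i v y) u', u - u'⟫ + τ / 2 * ‖u - u'‖ ^ 2)
    -- gradient consistency: `∇_{x_i} f̃_i(x_i, x) = ∇_{x_i} f(x)` for all `x ∈ X`
    (hgc : ∀ i, ∀ y : TS n m, (∀ j, y j ∈ X j) →
      gradient (fun u => ft i u y) (y i) = gradient f y i)
    -- `∇_{x_i} f̃_i(·, x)` is Lipschitz with constant `L = max_i L_i`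
    (L : ℝ) (hftLip : ∀ i, ∀ y : TS n m, (∀ j, y j ∈ X j) →
      ∀ u v : EuclideanSpace ℝ (Fin (m i)),
      ‖gradient (fun w => ft i w y) u - gradient (fun w => ft i w y) v‖ ≤ L * ‖u - v‖)
    -- an arbitrary sequence `(x^r) ⊆ X` and its best responses `x̂^r`
    (x : ℕ → TS n m) (hx : ∀ r j, x r j ∈ X j)
    (xhat : ℕ → TS n m)
    (hxhat : ∀ r i, xhat r i ∈ X i ∧
      IsMinOn (fun u => ft i u (x r) + g i u) (X i) (xhat r i))
    -- the sufficient-descent condition with constant `β̂ > 0`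
    (β : ℝ) (hβ : 0 < β)
    (hdec : ∀ r, f (x (r + 1)) + ∑ i, g i (x (r + 1) i) ≤
      f (x r) + ∑ i, g i (x r i) - β * ‖xhat r - x r‖ ^ 2)
    -- the proximal points `y^r` defining `∇̃h(x^r) = x^r − y^r`
    (y : ℕ → TS n m) (hyX : ∀ r j, y r j ∈ X j)
    (hy : ∀ r, IsMinOn
      (fun z => ⟪gradient f (x r), z - x r⟫ + (∑ i, g i (z i)) + 1 / 2 * ‖z - x r‖ ^ 2)
      {z : TS n m | ∀ j, z j ∈ X j} (y r))
    -- the constant `κ`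
    (κ : ℝ)
    (hκ : κ = 2 * (L ^ 2 + 2 * L + 2) * ((f (x 0) + ∑ i, g i (x 0 i)) - hstar) / β) :
    (∀ T : ℕ, ∑ r ∈ Finset.range (T + 1), ‖x r - y r‖ ^ 2 ≤ κ) ∧
    (∀ T : ℕ, ∃ r ≤ T, ‖x r - y r‖ ^ 2 ≤ κ / (T + 1)) ∧
    (∀ ε : ℝ, 0 < ε → ∃ r : ℕ, (r : ℝ) ≤ κ / ε ∧ ‖x r - y r‖ ^ 2 ≤ ε) := by
  -- notation
  set H : ℕ → ℝ := fun r => f (x r) + ∑ i, g i (x r i) with hH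
  have hHdef : ∀ r, H r = f (x r) + ∑ i, g i (x r i) := fun _ => rfl
  have hκ' : κ = 2 * (L ^ 2 + 2 * L + 2) * (H 0 - hstar) / β := hκ
  have hstar_le : ∀ r, hstar ≤ H r := fun r => hinf.1 ⟨x r, hx r, rfl⟩
  have hκnn : 0 ≤ κ := by
    rw [hκ']
    apply div_nonneg _ hβ.le
    apply mul_nonneg (by nlinarith [sq_nonneg (L + 1)])
    linarith [hstar_le 0]
  -- telescoping sum of the descent condition
  have htel : ∀ T : ℕ, H (T + 1) + β * ∑ r ∈ Finset.range (T + 1), ‖xhat r - x r‖ ^ 2 ≤ H 0 := by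
    intro T
    induction T with
    | zero =>
        rw [Finset.sum_range_one]
        have h0 := hdec 0
        rw [← hHdef 1, ← hHdef 0] at h0
        linarith
    | succ T ih =>
        have h1 := hdec (T + 1)
        rw [← hHdef (T + 2), ← hHdef (T + 1)] at h1
        rw [Finset.sum_range_succ]
        nlinarith [h1, ih]
  have sumb : ∀ T : ℕ, β * ∑ r ∈ Finset.range (T + 1), ‖xhat r - x r‖ ^ 2 ≤ H 0 - hstar := by
    intro T
    have h1 := htel T
    have h2 := hstar_le (T + 1)
    linarith
  -- the key summability bound
  have hsum : ∀ T : ℕ, ∑ r ∈ Finset.range (T + 1), ‖x r - y r‖ ^ 2 ≤ κ := by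
    by_cases hcase : ∀ i, m i = 0
    · -- the whole space is trivial
      haveI hfib : ∀ j, Subsingleton (EuclideanSpace ℝ (Fin (m j))) := fun j => by
        haveI : IsEmpty (Fin (m j)) := by rw [hcase j]; infer_instance
        infer_instance
      haveI : Subsingleton (TS n m) :=
        ⟨fun a b => by simpa using congrArg (WithLp.toLp 2) (Subsingleton.elim (α := ∀ j, EuclideanSpace ℝ (Fin (m j))) a.ofLp b.ofLp)⟩
      intro T
      have hz : ∀ r : ℕ, ‖x r - y r‖ ^ 2 = 0 := fun r => by
        rw [Subsingleton.elim (x r) (y r)]; simp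
      calc ∑ r ∈ Finset.range (T + 1), ‖x r - y r‖ ^ 2
          = 0 := by simp [hz]
        _ ≤ κ := hκnn
    · -- some coordinate space is nontrivial, hence `L ≥ 0`
      push_neg at hcase
      obtain ⟨i0, hi0⟩ := hcase
      have hL : 0 ≤ L := by
        by_contra hL
        push_neg at hL
        set u : EuclideanSpace ℝ (Fin (m i0)) :=
          EuclideanSpace.single (⟨0, Nat.pos_of_ne_zero hi0⟩ : Fin (m i0)) (1:ℝ) with hu
        have h1 := hftLip i0 (x 0) (hx 0) u 0
        rw [sub_zero, hu, EuclideanSpace.norm_single] at h1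
        simp only [norm_one, mul_one] at h1
        exact absurd (le_trans (norm_nonneg _) h1) (not_le.mpr hL)
      -- per-step bound on the proximal gradient by the best-response gap
      have key : ∀ r : ℕ, ‖x r - y r‖ ^ 2 ≤ (L ^ 2 + 4 * L + 1) * ‖xhat r - x r‖ ^ 2 := by
        intro r
        set gf : TS n m := gradient f (x r) with hgf
        set Gh : TS n m := WithLp.toLp 2 (fun i => gradient (fun v => ft i v (x r)) (xhat r i)) with hGh
        -- step A: first-order condition for the best responses
        have stepA : ∀ i, g i (xhat r i) - g i (y r i) ≤ ⟪Gh i, y r i - xhat r i⟫ := by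
          intro i
          exact vi_aux' (hXcv i) hτ (hg i) (hsc i (x r) (hx r)) (hftLip i (x r) (hx r))
            (hxhat r i).1 (hxhat r i).2 (hyX r i)
        have stepAsum :
            (∑ i, g i (xhat r i)) - (∑ i, g i (y r i)) ≤ ⟪Gh, y r - xhat r⟫ := by
          rw [PiLp.inner_apply, ← Finset.sum_sub_distrib]
          apply Finset.sum_le_sum
          intro i _
          simpa using stepA i
        -- step B: first-order condition for the proximal points
        have hSconv : Convex ℝ {z : TS n m | ∀ j, z j ∈ X j} := by
          intro a ha b hb s t hs ht hst j
          have hco : (s • a + t • b) j = s • a j + t • b j := by simp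
          rw [hco]
          exact hXcv j (ha j) (hb j) hs ht hst
        have hGcv : ∀ a b : TS n m, ∀ t : ℝ, 0 ≤ t → t ≤ 1 →
            (∑ i, g i (((1 - t) • a + t • b) i)) ≤
              (1 - t) * (∑ i, g i (a i)) + t * (∑ i, g i (b i)) := by
          intro a b t ht0 ht1
          have hco : ∀ i, g i (((1 - t) • a + t • b) i) ≤
              (1 - t) * g i (a i) + t * g i (b i) := by
            intro i
            have hc : ((1 - t) • a + t • b) i = (1 - t) • a i + t • b i := by simp
            rw [hc]
            simpa [smul_eq_mul] using
              (hg i).2 (Set.mem_univ (a i)) (Set.mem_univ (b i)) (by linarith) ht0 (by ring)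
          calc (∑ i, g i (((1 - t) • a + t • b) i))
              ≤ ∑ i, ((1 - t) * g i (a i) + t * g i (b i)) :=
                Finset.sum_le_sum fun i _ => hco i
            _ = (1 - t) * (∑ i, g i (a i)) + t * (∑ i, g i (b i)) := by
                rw [Finset.sum_add_distrib, ← Finset.mul_sum, ← Finset.mul_sum]
        have stepB : (∑ i, g i (y r i)) - (∑ i, g i (xhat r i)) ≤
            ⟪gf + (y r - x r), xhat r - y r⟫ :=
          vi_quad' hSconv hGcv (hyX r) (hy r) (fun j => (hxhat r j).1)
        -- combine the two variational inequalities
        have comb : (0:ℝ) ≤ ⟪Gh, y r - xhat r⟫ + ⟪gf + (y r - x r), xhat r - y r⟫ := by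
          linarith
        have hsplit : ⟪Gh, y r - xhat r⟫ + ⟪gf + (y r - x r), xhat r - y r⟫
            = ⟪gf - Gh, xhat r - y r⟫ + ⟪y r - x r, xhat r - y r⟫ := by
          have h1 : y r - xhat r = -(xhat r - y r) := by abel
          simp only [h1, inner_neg_right, inner_add_left, inner_sub_left]; ring
        rw [hsplit] at comb
        -- bound `‖∇f(x) − ∇f̃(x̂,x)‖ ≤ L‖x − x̂‖`
        have gnormsq : ‖gf - Gh‖ ^ 2 ≤ (L * ‖x r - xhat r‖) ^ 2 := by
          have e1 : ‖gf - Gh‖ ^ 2 = ∑ i, ‖(gf - Gh) i‖ ^ 2 := PiLp.norm_sq_eq_of_L2 _ _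
          have e2 : ‖x r - xhat r‖ ^ 2 = ∑ i, ‖(x r - xhat r) i‖ ^ 2 :=
            PiLp.norm_sq_eq_of_L2 _ _
          have e3 : ∀ i, ‖(gf - Gh) i‖ ^ 2 ≤ L ^ 2 * ‖(x r - xhat r) i‖ ^ 2 := by
            intro i
            have hgi : gf i = gradient (fun v => ft i v (x r)) (x r i) :=
              (hgc i (x r) (hx r)).symm
            have hb' := hftLip i (x r) (hx r) (x r i) (xhat r i)
            have hni : ‖(gf - Gh) i‖ ≤ L * ‖(x r - xhat r) i‖ := by
              have hc1 : (gf - Gh) i = gf i - Gh i := by simp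
              have hc2 : (x r - xhat r) i = x r i - xhat r i := by simp
              rw [hc1, hc2, hgi]
              exact hb'
            calc ‖(gf - Gh) i‖ ^ 2 ≤ (L * ‖(x r - xhat r) i‖) ^ 2 :=
                  pow_le_pow_left₀ (norm_nonneg _) hni 2
              _ = L ^ 2 * ‖(x r - xhat r) i‖ ^ 2 := by ring
          calc ‖gf - Gh‖ ^ 2 = ∑ i, ‖(gf - Gh) i‖ ^ 2 := e1
            _ ≤ ∑ i, L ^ 2 * ‖(x r - xhat r) i‖ ^ 2 := Finset.sum_le_sum fun i _ => e3 i
            _ = L ^ 2 * ∑ i, ‖(x r - xhat r) i‖ ^ 2 := (Finset.mul_sum _ _ _).symm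
            _ = (L * ‖x r - xhat r‖) ^ 2 := by rw [← e2]; ring
        have gnorm : ‖gf - Gh‖ ≤ L * ‖x r - xhat r‖ :=
          (pow_le_pow_iff_left₀ (norm_nonneg _)
            (mul_nonneg hL (norm_nonneg _)) two_ne_zero).mp gnormsq
        -- scalar estimates
        set a : ℝ := ‖x r - y r‖ with ha
        set b : ℝ := ‖x r - xhat r‖ with hb
        have hbb : ‖xhat r - x r‖ = b := norm_sub_rev _ _
        have i1 : ⟪gf - Gh, xhat r - y r⟫ ≤ (L * b) * ‖xhat r - y r‖ :=
          (real_inner_le_norm _ _).trans (mul_le_mul_of_nonneg_right gnorm (norm_nonneg _))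
        have tri : ‖xhat r - y r‖ ≤ b + a := by
          have hdc : xhat r - y r = -(x r - xhat r) + (x r - y r) := by abel
          rw [hdc]
          exact (norm_add_le _ _).trans (by rw [norm_neg])
        have i1b : (L * b) * ‖xhat r - y r‖ ≤ (L * b) * (b + a) :=
          mul_le_mul_of_nonneg_left tri (mul_nonneg hL (norm_nonneg _))
        have i2 : ⟪y r - x r, xhat r - y r⟫ ≤ a * b - a ^ 2 := by
          have hdc : xhat r - y r = (xhat r - x r) + (x r - y r) := by abel
          rw [hdc, inner_add_right]
          have e4 : ⟪y r - x r, x r - y r⟫ = -(a ^ 2) := by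
            have hne : y r - x r = -(x r - y r) := by abel
            rw [hne, inner_neg_left, real_inner_self_eq_norm_sq, ha]
          have e5 : ⟪y r - x r, xhat r - x r⟫ ≤ a * b := by
            calc ⟪y r - x r, xhat r - x r⟫ ≤ ‖y r - x r‖ * ‖xhat r - x r‖ :=
                  real_inner_le_norm _ _
              _ = a * b := by rw [norm_sub_rev, hbb, ha]
          linarith [e4, e5]
        rw [hbb]
        have hann : 0 ≤ a := norm_nonneg _
        have hbnn : 0 ≤ b := norm_nonneg _
        exact alg_aux' hann hbnn hL comb (i1.trans i1b) i2
      -- sum up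
      intro T
      have h1 : ∑ r ∈ Finset.range (T + 1), ‖x r - y r‖ ^ 2 ≤
          (L ^ 2 + 4 * L + 1) * ∑ r ∈ Finset.range (T + 1), ‖xhat r - x r‖ ^ 2 := by
        rw [Finset.mul_sum]
        exact Finset.sum_le_sum fun r _ => key r
      have h2 := sumb T
      have hSbnn : (0:ℝ) ≤ ∑ r ∈ Finset.range (T + 1), ‖xhat r - x r‖ ^ 2 :=
        Finset.sum_nonneg fun r _ => sq_nonneg _
      have hM : (0:ℝ) ≤ H 0 - hstar := by linarith [hstar_le 0]
      rw [hκ', le_div_iff₀ hβ]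
      linarith [mul_le_mul_of_nonneg_right h1 hβ.le,
        mul_le_mul_of_nonneg_left h2 (by nlinarith : (0:ℝ) ≤ L ^ 2 + 4 * L + 1),
        mul_nonneg (by nlinarith : (0:ℝ) ≤ L ^ 2 + 3) hM]
  -- conclusions
  have hmin2 : ∀ T : ℕ, ∃ r ≤ T, ‖x r - y r‖ ^ 2 ≤ κ / (T + 1) := by
    intro T
    have hne : (Finset.range (T + 1)).Nonempty := ⟨0, by simp⟩
    have hsum' : ∑ r ∈ Finset.range (T + 1), ‖x r - y r‖ ^ 2 ≤
        ∑ _r ∈ Finset.range (T + 1), κ / (T + 1) := by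
      rw [Finset.sum_const, Finset.card_range, nsmul_eq_mul]
      push_cast
      rw [mul_div_cancel₀ _ (by positivity : (T:ℝ) + 1 ≠ 0)]
      exact hsum T
    obtain ⟨r, hr, hr2⟩ := Finset.exists_le_of_sum_le hne hsum'
    exact ⟨r, Nat.lt_succ_iff.mp (Finset.mem_range.mp hr), hr2⟩
  refine ⟨hsum, hmin2, ?_⟩
  intro ε hε
  set T : ℕ := ⌊κ / ε⌋₊ with hT
  obtain ⟨r, hrT, hr⟩ := hmin2 T
  have hTle : (T:ℝ) ≤ κ / ε := Nat.floor_le (by positivity)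
  have hlt : κ / ε < T + 1 := Nat.lt_floor_add_one _
  have hκlt : κ < ε * (T + 1) := by
    rw [div_lt_iff₀ hε] at hlt; linarith [hlt]
  refine ⟨r, le_trans (by exact_mod_cast Nat.cast_le.mpr hrT) hTle, ?_⟩
  refine hr.trans ?_
  rw [div_le_iff₀ (by positivity : (0:ℝ) < (T:ℝ) + 1)]
  nlinarith
end
end
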